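/- arXiv:1602.00182 — 6 statements merged into one kernel-verified Lean document; each statement's English description precedes it below -/
import Mathlib

section
/- Let v be smooth with v(x_{i+1/2}) ≠ 0, and set ε² = −(1/3)·v''(x_{i+1/2})/v(x_{i+1/2}). Then the reconstruction p = (1/2 + (1/4)ε²Δx²)·v̄_i + (1/2 + (1/4)ε²Δx²)·v̄_{i+1} satisfies p = v(x_{i+1/2}) + O(Δx⁴) as Δx → 0. -/
open Filter Asymptotics

private lemma iterWithin_eq {n : ℕ} {m : ℕ∞} (f : ℝ → ℝ) (hf : ContDiff ℝ m f)
    (hmn : (n : WithTop ℕ∞) ≤ (m : WithTop ℕ∞)) {s : Set ℝ} (hs : UniqueDiffOn ℝ s) {y : ℝ} (hy : y ∈ s) :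
    iteratedDerivWithin n f s y = iteratedDeriv n f y := by
  have h := (contDiff_iff_ftaylorSeries.mp hf).hasFTaylorSeriesUpToOn s
  have h2 := h.eq_iteratedFDerivWithin_of_uniqueDiffOn hmn hs hy
  rw [iteratedDerivWithin_eq_iteratedFDerivWithin, iteratedDeriv_eq_iteratedFDeriv, ← h2]
  rfl


private lemma deriv_sym_sub {f : ℝ → ℝ} (hf : Differentiable ℝ f) (x : ℝ) :
    deriv (fun h => f (x + h) - f (x - h)) = fun h => deriv f (x + h) + deriv f (x - h) := by
  funext h
  have h1 : HasDerivAt (fun h : ℝ => f (x + h)) (deriv f (x + h)) h := by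
    simpa [Function.comp_def] using ((hf (x + h)).hasDerivAt.comp h ((hasDerivAt_id h).const_add x))
  have h2 : HasDerivAt (fun h : ℝ => f (x - h)) (-deriv f (x - h)) h := by
    simpa [Function.comp_def] using ((hf (x - h)).hasDerivAt.comp h ((hasDerivAt_id h).const_sub x))
  have := (h1.sub h2).deriv
  simpa [Pi.sub_def] using this

private lemma deriv_sym_add {f : ℝ → ℝ} (hf : Differentiable ℝ f) (x : ℝ) :
    deriv (fun h => f (x + h) + f (x - h)) = fun h => deriv f (x + h) - deriv f (x - h) := by
  funext h
  have h1 : HasDerivAt (fun h : ℝ => f (x + h)) (deriv f (x + h)) h := by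
    simpa [Function.comp_def] using ((hf (x + h)).hasDerivAt.comp h ((hasDerivAt_id h).const_add x))
  have h2 : HasDerivAt (fun h : ℝ => f (x - h)) (-deriv f (x - h)) h := by
    simpa [Function.comp_def] using ((hf (x - h)).hasDerivAt.comp h ((hasDerivAt_id h).const_sub x))
  have := (h1.add h2).deriv
  simpa [sub_eq_add_neg, Pi.add_def] using this

/-- Fourth-order accuracy of the perturbed reconstruction with the optimal shape parameter. -/
theorem stmt_2 (v : ℝ → ℝ) (hv : ContDiff ℝ 4 v) (x : ℝ) (hvx : v x ≠ 0)
    (e2 : ℝ) (he2 : e2 = -(1/3) * iteratedDeriv 2 v x / v x) :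
    (fun Δx : ℝ =>
        ((1/2 + (1/4) * e2 * Δx ^ 2) * ((1/Δx) * ∫ t in (x - Δx)..x, v t)
          + (1/2 + (1/4) * e2 * Δx ^ 2) * ((1/Δx) * ∫ t in x..(x + Δx), v t))
        - v x)
      =O[nhdsWithin 0 (Set.Ioi 0)] (fun Δx : ℝ => Δx ^ 4) := by
  have hc : Continuous v := hv.continuous
  set G : ℝ → ℝ := fun y => ∫ t in x..y, v t with hGdef
  have hG : ∀ y, HasDerivAt G (v y) y := by
    intro y
    exact intervalIntegral.integral_hasDerivAt_right (hc.intervalIntegrable _ _)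
      (hc.stronglyMeasurable.stronglyMeasurableAtFilter) hc.continuousAt
  have hderivG : deriv G = v := funext fun y => (hG y).deriv
  have hG5 : ContDiff ℝ 5 G := by
    have h45 : (5 : WithTop ℕ∞) = (4 : ℕ) + 1 := by norm_cast
    rw [h45, contDiff_succ_iff_deriv]
    refine ⟨fun y => (hG y).differentiableAt, by simp, ?_⟩
    rw [hderivG]; exact_mod_cast hv
  set F : ℝ → ℝ := fun h => G (x + h) - G (x - h) with hFdef
  have hF5 : ContDiff ℝ 5 F :=
    (hG5.comp (contDiff_const.add contDiff_id)).sub (hG5.comp (contDiff_const.sub contDiff_id))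
  -- derivatives of v
  have step : ∀ (n : WithTop ℕ∞) (f : ℝ → ℝ), ContDiff ℝ (n + 1) f →
      Differentiable ℝ f ∧ ContDiff ℝ n (deriv f) := fun n f hf =>
    ⟨(contDiff_succ_iff_deriv.mp hf).1, (contDiff_succ_iff_deriv.mp hf).2.2⟩
  have hv4 : ContDiff ℝ ((3 : WithTop ℕ∞) + 1) v := by
    convert hv using 2; norm_num
  obtain ⟨hvd, hv3⟩ := step 3 v hv4
  set w1 := deriv v with hw1def
  have hv3' : ContDiff ℝ ((2 : WithTop ℕ∞) + 1) w1 := by convert hv3 using 2; norm_num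
  obtain ⟨hw1d, hv2⟩ := step 2 w1 hv3'
  set w2 := deriv w1 with hw2def
  have hv2' : ContDiff ℝ ((1 : WithTop ℕ∞) + 1) w2 := by convert hv2 using 2; norm_num
  obtain ⟨hw2d, hv1⟩ := step 1 w2 hv2'
  set w3 := deriv w2 with hw3def
  -- derivative chain of F
  have hGd : Differentiable ℝ G := fun y => (hG y).differentiableAt
  have eF : deriv F = fun h => v (x + h) + v (x - h) := by
    rw [hFdef, deriv_sym_sub hGd x, hderivG]
  have eF1 : deriv (fun h => v (x + h) + v (x - h)) = fun h => w1 (x + h) - w1 (x - h) :=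
    deriv_sym_add hvd x
  have eF2 : deriv (fun h => w1 (x + h) - w1 (x - h)) = fun h => w2 (x + h) + w2 (x - h) :=
    deriv_sym_sub hw1d x
  have eF3 : deriv (fun h => w2 (x + h) + w2 (x - h)) = fun h => w3 (x + h) - w3 (x - h) :=
    deriv_sym_add hw2d x
  -- iterated derivatives of F at 0
  have d0 : F 0 = 0 := by simp [hFdef]
  have d1 : iteratedDeriv 1 F 0 = 2 * v x := by
    rw [iteratedDeriv_one, eF]; simp; ring
  have d2 : iteratedDeriv 2 F 0 = 0 := by
    rw [show (2:ℕ) = 1 + 1 from rfl, iteratedDeriv_succ, iteratedDeriv_one, eF, eF1]; simp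
  have d3 : iteratedDeriv 3 F 0 = 2 * w2 x := by
    rw [show (3:ℕ) = 1 + 1 + 1 from rfl, iteratedDeriv_succ, iteratedDeriv_succ,
      iteratedDeriv_one, eF, eF1, eF2]
    simp; ring
  have d4 : iteratedDeriv 4 F 0 = 0 := by
    rw [show (4:ℕ) = 1 + 1 + 1 + 1 from rfl, iteratedDeriv_succ, iteratedDeriv_succ,
      iteratedDeriv_succ, iteratedDeriv_one, eF, eF1, eF2, eF3]
    simp
  have hB : iteratedDeriv 2 v x = w2 x := by
    rw [show (2:ℕ) = 1 + 1 from rfl, iteratedDeriv_succ, iteratedDeriv_one]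
  -- Taylor polynomial of F at 0 on Icc 0 1
  set s1 : Set ℝ := Set.Icc 0 1 with hs1
  have hs : UniqueDiffOn ℝ s1 := uniqueDiffOn_Icc one_pos
  have h0s : (0:ℝ) ∈ s1 := ⟨le_refl _, by norm_num⟩
  have hF5' : ContDiff ℝ ((5:ℕ∞) : WithTop ℕ∞) F := by exact_mod_cast hF5
  have hwit : ∀ k : ℕ, k ≤ 5 → iteratedDerivWithin k F s1 0 = iteratedDeriv k F 0 := by
    intro k hk
    exact iterWithin_eq F hF5' (by exact_mod_cast hk) hs h0s
  have hT : ∀ h : ℝ, taylorWithinEval F 4 s1 0 h = 2 * v x * h + w2 x * h ^ 3 / 3 := by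
    intro h
    rw [taylor_within_apply]
    rw [Finset.sum_range_succ, Finset.sum_range_succ, Finset.sum_range_succ,
      Finset.sum_range_succ, Finset.sum_range_succ, Finset.sum_range_zero,
      hwit 0 (by norm_num), hwit 1 (by norm_num), hwit 2 (by norm_num), hwit 3 (by norm_num),
      hwit 4 (by norm_num), iteratedDeriv_zero, d0, d1, d2, d3, d4]
    norm_num [Nat.factorial]
    ring
  have hF41 : ContDiffOn ℝ ((4:ℕ) + 1) F s1 := by
    exact (hF5.of_le (by norm_num)).contDiffOn
  obtain ⟨C, hC⟩ := exists_taylor_mean_remainder_bound zero_le_one hF41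
  have hCnn : 0 ≤ C := by
    have h1 := hC 1 ⟨zero_le_one, le_refl _⟩
    have h2 := norm_nonneg (F 1 - taylorWithinEval F 4 (Set.Icc 0 1) 0 1)
    simp only [sub_zero, one_pow, mul_one] at h1
    linarith
  have hint : ∀ h : ℝ, (∫ t in (x - h)..x, v t) + ∫ t in x..(x + h), v t = F h := by
    intro h
    rw [intervalIntegral.integral_add_adjacent_intervals (hc.intervalIntegrable _ _)
      (hc.intervalIntegrable _ _), hFdef]
    exact (intervalIntegral.integral_interval_sub_left (hc.intervalIntegrable _ _)
      (hc.intervalIntegrable _ _)).symm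
  have he2A : e2 * v x = -(1/3) * w2 x := by
    rw [he2, hB]; field_simp
  rw [isBigO_iff]
  refine ⟨(1/2 + |e2| / 4) * C + |e2 * w2 x| / 12, ?_⟩
  filter_upwards [Ioo_mem_nhdsGT_of_mem (Set.left_mem_Ico.mpr one_pos)] with h hh
  obtain ⟨h0, h1⟩ := hh
  have hne : h ≠ 0 := ne_of_gt h0
  set R := F h - taylorWithinEval F 4 s1 0 h with hRdef
  have hRb : |R| ≤ C * h ^ 5 := by
    have h5 := hC h ⟨le_of_lt h0, le_of_lt h1⟩
    rw [Real.norm_eq_abs, sub_zero] at h5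
    exact h5
  have hexpr : ((1/2 + (1/4) * e2 * h ^ 2) * ((1/h) * ∫ t in (x - h)..x, v t)
      + (1/2 + (1/4) * e2 * h ^ 2) * ((1/h) * ∫ t in x..(x + h), v t)) - v x
      = (1/2 + (1/4) * e2 * h ^ 2) * ((1/h) * R) + (e2 * w2 x / 12) * h ^ 4 := by
    have hFh := hint h
    have hRT : F h = R + (2 * v x * h + w2 x * h ^ 3 / 3) := by rw [hRdef, hT h]; ring
    have comb : ((1/2 + (1/4) * e2 * h ^ 2) * ((1/h) * ∫ t in (x - h)..x, v t)
        + (1/2 + (1/4) * e2 * h ^ 2) * ((1/h) * ∫ t in x..(x + h), v t))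
        = (1/2 + (1/4) * e2 * h ^ 2) * ((1/h) * F h) := by
      rw [← hFh]; ring
    rw [comb, hRT,
      show (1/h) * (R + (2 * v x * h + w2 x * h ^ 3 / 3))
          = (1/h) * R + (2 * v x + w2 x * h ^ 2 / 3) from by field_simp]
    linear_combination (h ^ 2 / 2) * he2A
  simp only [hexpr]
  rw [Real.norm_eq_abs, Real.norm_eq_abs, abs_of_pos (pow_pos h0 4)]
  have hh2 : h ^ 2 ≤ 1 := by nlinarith
  have hcb : |1/2 + (1/4) * e2 * h ^ 2| ≤ 1/2 + |e2| / 4 := by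
    have ha := abs_add_le (1/2 : ℝ) ((1/4) * e2 * h ^ 2)
    have h2 : |(1/4) * e2 * h ^ 2| = (1/4) * |e2| * h ^ 2 := by
      rw [abs_mul, abs_mul, abs_of_nonneg (by positivity : (0:ℝ) ≤ h ^ 2)]
      norm_num
    rw [h2] at ha
    have : (1/4) * |e2| * h ^ 2 ≤ |e2| / 4 := by nlinarith [abs_nonneg e2]
    calc |1/2 + (1/4) * e2 * h ^ 2| ≤ |(1/2 : ℝ)| + (1/4) * |e2| * h ^ 2 := ha
      _ ≤ 1/2 + |e2| / 4 := by rw [abs_of_pos (by norm_num : (0:ℝ) < 1/2)]; linarith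
  calc |(1/2 + (1/4) * e2 * h ^ 2) * ((1/h) * R) + (e2 * w2 x / 12) * h ^ 4|
      ≤ |(1/2 + (1/4) * e2 * h ^ 2) * ((1/h) * R)| + |(e2 * w2 x / 12) * h ^ 4| :=
        abs_add_le _ _
    _ = |1/2 + (1/4) * e2 * h ^ 2| * ((1/h) * |R|) + |e2 * w2 x| / 12 * h ^ 4 := by
        rw [abs_mul, abs_mul, abs_mul, abs_of_pos (by positivity : (0:ℝ) < 1/h),
          abs_of_pos (pow_pos h0 4), abs_div]
        norm_num
    _ ≤ (1/2 + |e2| / 4) * ((1/h) * (C * h ^ 5)) + |e2 * w2 x| / 12 * h ^ 4 := by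
        gcongr
    _ = ((1/2 + |e2| / 4) * C + |e2 * w2 x| / 12) * h ^ 4 := by
        field_simp
end

section
/- With ε² chosen as ε² = (2/Δx²)·(−v̄_{i−1} + 2v̄_i − v̄_{i+1})/(−v̄_{i−1} + 5v̄_i + 2v̄_{i+1}), the reconstruction p = (1/2 + (1/4)ε²Δx²)(v̄_i + v̄_{i+1}) satisfies p = v(x_{i+1/2}) + (1/12)v'''(x_{i+1/2})Δx³ + O(Δx⁴), for smooth v with −v̄_{i−1} + 5v̄_i + 2v̄_{i+1} bounded away from 0 (e.g. v(x_{i+1/2}) ≠ 0). -/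
open Filter Asymptotics Topology

lemma step_bigO (g : ℝ → ℝ) (hg : Differentiable ℝ g) (h0 : g 0 = 0) (n : ℕ)
    (hd : (deriv g) =O[𝓝 (0:ℝ)] fun s => s ^ n) :
    g =O[𝓝 (0:ℝ)] fun s => s ^ (n+1) := by
  obtain ⟨c, hc⟩ := hd.bound
  rw [Metric.eventually_nhds_iff] at hc
  obtain ⟨δ, hδ, hB⟩ := hc
  rw [isBigO_iff]
  refine ⟨max c 0, Metric.eventually_nhds_iff.mpr ⟨δ, hδ, fun t ht => ?_⟩⟩
  have htδ : |t| < δ := by simpa [Real.dist_eq] using ht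
  have key : ∀ u ∈ Set.uIcc (0:ℝ) t, ‖deriv g u‖ ≤ max c 0 * |t| ^ n := by
    intro u hu
    have hut : |u| ≤ |t| := by
      rw [Set.uIcc_eq_union] at hu
      rcases hu with hu | hu <;> rw [abs_le] <;> constructor <;>
        cases' abs_le.mp (le_refl |t|) with h1 h2 <;> nlinarith [hu.1, hu.2, abs_nonneg t,
          neg_abs_le t, le_abs_self t]
    have hud : dist u 0 < δ := by simpa [Real.dist_eq] using lt_of_le_of_lt hut htδ
    calc ‖deriv g u‖ ≤ c * ‖u ^ n‖ := hB hud
      _ ≤ max c 0 * |u| ^ n := by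
          rw [norm_pow, Real.norm_eq_abs]
          exact mul_le_mul_of_nonneg_right (le_max_left _ _) (by positivity)
      _ ≤ max c 0 * |t| ^ n := mul_le_mul_of_nonneg_left (pow_le_pow_left₀ (abs_nonneg _) hut n) (le_max_right _ _)
  have := (convex_uIcc (0:ℝ) t).norm_image_sub_le_of_norm_deriv_le
    (fun u _ => hg.differentiableAt) key Set.left_mem_uIcc Set.right_mem_uIcc
  rw [h0, sub_zero, sub_zero] at this
  calc ‖g t‖ ≤ max c 0 * |t| ^ n * ‖t‖ := this
    _ = max c 0 * ‖t ^ (n+1)‖ := by rw [norm_pow, pow_succ]; simp [Real.norm_eq_abs]; ring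


lemma remainder_bigO (v : ℝ → ℝ) (hv : ContDiff ℝ 4 v) (x : ℝ) :
    (fun s => v (x+s) - (v x + deriv v x * s + iteratedDeriv 2 v x * s^2/2
      + iteratedDeriv 3 v x * s^3/6)) =O[𝓝 (0:ℝ)] fun s => s^4 := by
  have hcomp : ∀ k : ℕ, k < 4 → ∀ s : ℝ,
      HasDerivAt (fun s => iteratedDeriv k v (x+s)) (iteratedDeriv (k+1) v (x+s)) s := by
    intro k hk s
    have h1 : HasDerivAt (fun s : ℝ => x + s) 1 s := by
      simpa using (hasDerivAt_id s).const_add x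
    have h2 : HasDerivAt (iteratedDeriv k v) (deriv (iteratedDeriv k v) (x+s)) (x+s) :=
      ((hv.differentiable_iteratedDeriv k (by exact_mod_cast hk)).differentiableAt).hasDerivAt
    have := h2.comp s h1
    rw [mul_one, ← iteratedDeriv_succ] at this
    exact this
  -- g3
  have h4cont : Continuous (fun s : ℝ => iteratedDeriv 4 v (x+s)) :=
    (hv.continuous_iteratedDeriv 4 le_rfl).comp (continuous_const.add continuous_id)
  set g3 : ℝ → ℝ := fun s => iteratedDeriv 3 v (x+s) - iteratedDeriv 3 v x with hg3def
  have hg3' : ∀ s, HasDerivAt g3 (iteratedDeriv 4 v (x+s)) s := fun s =>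
    (hcomp 3 (by norm_num) s).sub_const _
  have hO3 : g3 =O[𝓝 (0:ℝ)] fun s => s ^ 1 := by
    have hdO : (deriv g3) =O[𝓝 (0:ℝ)] (fun _ => (1:ℝ)) := by
      have : deriv g3 = fun s => iteratedDeriv 4 v (x+s) := funext fun s => (hg3' s).deriv
      rw [this]
      exact (h4cont.tendsto 0).isBigO_one ℝ
    have := step_bigO g3 (fun s => (hg3' s).differentiableAt) (by simp [hg3def]) 0
      (by simpa using hdO)
    simpa using this
  -- g2
  set g2 : ℝ → ℝ := fun s => iteratedDeriv 2 v (x+s)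
    - (iteratedDeriv 2 v x + iteratedDeriv 3 v x * s) with hg2def
  have hg2' : ∀ s, HasDerivAt g2 (g3 s) s := by
    intro s
    have hpoly : HasDerivAt (fun s : ℝ => iteratedDeriv 2 v x + iteratedDeriv 3 v x * s)
        (iteratedDeriv 3 v x) s := by
      simpa using ((hasDerivAt_id s).const_mul (iteratedDeriv 3 v x)).const_add
        (iteratedDeriv 2 v x)
    exact (hcomp 2 (by norm_num) s).sub hpoly
  have hO2 : g2 =O[𝓝 (0:ℝ)] fun s => s ^ 2 := by
    have hdO : (deriv g2) =O[𝓝 (0:ℝ)] (fun s => s ^ 1) := by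
      have : deriv g2 = g3 := funext fun s => (hg2' s).deriv
      rw [this]; exact hO3
    exact step_bigO g2 (fun s => (hg2' s).differentiableAt) (by simp [hg2def]) 1 hdO
  -- g1
  set g1 : ℝ → ℝ := fun s => deriv v (x+s)
    - (deriv v x + iteratedDeriv 2 v x * s + iteratedDeriv 3 v x * s^2/2) with hg1def
  have hg1' : ∀ s, HasDerivAt g1 (g2 s) s := by
    intro s
    have h1 : HasDerivAt (fun s : ℝ => deriv v x + iteratedDeriv 2 v x * s)
        (iteratedDeriv 2 v x) s := by
      simpa using ((hasDerivAt_id s).const_mul (iteratedDeriv 2 v x)).const_add (deriv v x)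
    have h2 : HasDerivAt (fun s : ℝ => iteratedDeriv 3 v x * s^2/2)
        (iteratedDeriv 3 v x * s) s := by
      have := ((hasDerivAt_pow 2 s).const_mul (iteratedDeriv 3 v x)).div_const 2
      exact this.congr_deriv (by ring)
    have hc := hcomp 1 (by norm_num) s
    rw [iteratedDeriv_one] at hc
    exact hc.sub (h1.add h2)
  have hO1 : g1 =O[𝓝 (0:ℝ)] fun s => s ^ 3 := by
    have hdO : (deriv g1) =O[𝓝 (0:ℝ)] (fun s => s ^ 2) := by
      have : deriv g1 = g2 := funext fun s => (hg1' s).deriv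
      rw [this]; exact hO2
    exact step_bigO g1 (fun s => (hg1' s).differentiableAt) (by simp [hg1def]) 2 hdO
  -- g0
  set g0 : ℝ → ℝ := fun s => v (x+s) - (v x + deriv v x * s + iteratedDeriv 2 v x * s^2/2
    + iteratedDeriv 3 v x * s^3/6) with hg0def
  have hg0' : ∀ s, HasDerivAt g0 (g1 s) s := by
    intro s
    have h1 : HasDerivAt (fun s : ℝ => v x + deriv v x * s) (deriv v x) s := by
      simpa using ((hasDerivAt_id s).const_mul (deriv v x)).const_add (v x)
    have h2 : HasDerivAt (fun s : ℝ => iteratedDeriv 2 v x * s^2/2)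
        (iteratedDeriv 2 v x * s) s := by
      have := ((hasDerivAt_pow 2 s).const_mul (iteratedDeriv 2 v x)).div_const 2
      exact this.congr_deriv (by ring)
    have h3 : HasDerivAt (fun s : ℝ => iteratedDeriv 3 v x * s^3/6)
        (iteratedDeriv 3 v x * s^2/2) s := by
      have := ((hasDerivAt_pow 3 s).const_mul (iteratedDeriv 3 v x)).div_const 6
      exact this.congr_deriv (by ring)
    have hc := hcomp 0 (by norm_num) s
    rw [iteratedDeriv_zero, iteratedDeriv_one] at hc
    exact hc.sub ((h1.add h2).add h3)
  have hO0 : g0 =O[𝓝 (0:ℝ)] fun s => s ^ 4 := by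
    have hdO : (deriv g0) =O[𝓝 (0:ℝ)] (fun s => s ^ 3) := by
      have : deriv g0 = g1 := funext fun s => (hg0' s).deriv
      rw [this]; exact hO1
    exact step_bigO g0 (fun s => (hg0' s).differentiableAt) (by simp [hg0def]) 3 hdO
  exact hO0
lemma avg_bigO (v : ℝ → ℝ) (hv : ContDiff ℝ 4 v) (x : ℝ) (c₁ c₂ : ℝ) :
    (fun h : ℝ => (1/h) * (∫ t in (x + c₁*h)..(x + c₂*h), v t)
      - (v x * (c₂ - c₁) + deriv v x * (c₂^2 - c₁^2)/2 * h
        + iteratedDeriv 2 v x * (c₂^3 - c₁^3)/6 * h^2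
        + iteratedDeriv 3 v x * (c₂^4 - c₁^4)/24 * h^3)) =O[𝓝[>] (0:ℝ)]
      fun h => h^4 := by
  obtain ⟨C, hC⟩ := (remainder_bigO v hv x).bound
  rw [Metric.eventually_nhds_iff] at hC
  obtain ⟨δ, hδ, hB⟩ := hC
  set d1 := deriv v x
  set d2 := iteratedDeriv 2 v x
  set d3 := iteratedDeriv 3 v x
  set M : ℝ := |c₁| + |c₂| + 1 with hM
  have hMpos : (0:ℝ) < M := by positivity
  set P4 : ℝ → ℝ := fun s => v x + d1 * s + d2 * s^2/2 + d3 * s^3/6 with hP4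
  set g0 : ℝ → ℝ := fun s => v (x+s) - P4 s with hg0
  have hP4c : Continuous P4 := by fun_prop
  have hg0c : Continuous g0 := by
    have := hv.continuous
    fun_prop
  set Q : ℝ → ℝ := fun s => v x * s + d1 * s^2/2 + d2 * s^3/6 + d3 * s^4/24 with hQ
  have hQd : ∀ u : ℝ, HasDerivAt Q (P4 u) u := by
    intro u
    have h1 : HasDerivAt (fun s : ℝ => v x * s) (v x) u := by
      simpa using (hasDerivAt_id u).const_mul (v x)
    have h2 : HasDerivAt (fun s : ℝ => d1 * s^2/2) (d1 * u) u := by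
      have := ((hasDerivAt_pow 2 u).const_mul d1).div_const 2
      exact this.congr_deriv (by ring)
    have h3 : HasDerivAt (fun s : ℝ => d2 * s^3/6) (d2 * u^2/2) u := by
      have := ((hasDerivAt_pow 3 u).const_mul d2).div_const 6
      exact this.congr_deriv (by ring)
    have h4 : HasDerivAt (fun s : ℝ => d3 * s^4/24) (d3 * u^3/6) u := by
      have := ((hasDerivAt_pow 4 u).const_mul d3).div_const 24
      exact this.congr_deriv (by ring)
    exact ((h1.add h2).add h3).add h4
  rw [isBigO_iff]
  refine ⟨max C 0 * M^4 * |c₂ - c₁|, ?_⟩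
  have hmem : Set.Ioo (0:ℝ) (δ / M) ∈ 𝓝[>] (0:ℝ) :=
    Ioo_mem_nhdsGT_of_mem ⟨le_refl _, div_pos hδ hMpos⟩
  filter_upwards [hmem] with h hh
  obtain ⟨h0, hhδ⟩ := hh
  have hne : h ≠ 0 := ne_of_gt h0
  set A := x + c₁*h with hA
  set B := x + c₂*h with hBdef
  -- split the integral
  have hsplit : (∫ t in A..B, v t)
      = (∫ t in A..B, P4 (t - x)) + ∫ t in A..B, g0 (t - x) := by
    rw [← intervalIntegral.integral_add
      (Continuous.intervalIntegrable (by fun_prop : Continuous fun t : ℝ => P4 (t - x)) _ _)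
      (Continuous.intervalIntegrable (by fun_prop : Continuous fun t : ℝ => g0 (t - x)) _ _)]
    apply intervalIntegral.integral_congr
    intro t _
    simp [hg0]
  have hpoly : (∫ t in A..B, P4 (t - x)) = Q (c₂*h) - Q (c₁*h) := by
    rw [intervalIntegral.integral_comp_sub_right (fun s => P4 s) x]
    have e1 : A - x = c₁*h := by rw [hA]; ring
    have e2 : B - x = c₂*h := by rw [hBdef]; ring
    rw [e1, e2]
    exact intervalIntegral.integral_eq_sub_of_hasDerivAt (fun u _ => hQd u)
      (hP4c.intervalIntegrable _ _)
  -- bound the remainder integral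
  have hbound : ‖∫ t in A..B, g0 (t - x)‖ ≤ max C 0 * (M*h)^4 * (|c₂ - c₁| * h) := by
    have key : ∀ t ∈ Set.uIoc A B, ‖g0 (t - x)‖ ≤ max C 0 * (M*h)^4 := by
      intro t ht
      have htx : |t - x| ≤ M * h := by
        rcases Set.mem_uIoc.mp ht with h' | h' <;> rw [abs_le] <;> constructor <;>
          nlinarith [h'.1, h'.2, neg_abs_le c₁, le_abs_self c₁, neg_abs_le c₂,
            le_abs_self c₂]
      have hdist : dist (t - x) (0:ℝ) < δ := by
        rw [Real.dist_eq, sub_zero]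
        calc |t - x| ≤ M * h := htx
          _ < M * (δ / M) := by exact mul_lt_mul_of_pos_left hhδ hMpos
          _ = δ := by field_simp
      have := hB hdist
      calc ‖g0 (t - x)‖ ≤ C * ‖(t - x)^4‖ := this
        _ ≤ max C 0 * (M*h)^4 := by
            rw [norm_pow, Real.norm_eq_abs]
            have h1 : |t-x|^4 ≤ (M*h)^4 :=
              pow_le_pow_left₀ (abs_nonneg _) htx 4
            have h2 : C * |t-x|^4 ≤ max C 0 * |t-x|^4 :=
              mul_le_mul_of_nonneg_right (le_max_left _ _) (by positivity)
            have h3 : max C 0 * |t-x|^4 ≤ max C 0 * (M*h)^4 :=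
              mul_le_mul_of_nonneg_left h1 (le_max_right _ _)
            linarith
    have := intervalIntegral.norm_integral_le_of_norm_le_const key
    calc ‖∫ t in A..B, g0 (t - x)‖ ≤ max C 0 * (M*h)^4 * |B - A| := this
      _ = max C 0 * (M*h)^4 * (|c₂ - c₁| * h) := by
          congr 1
          rw [hBdef, hA]
          rw [show x + c₂*h - (x + c₁*h) = (c₂ - c₁) * h by ring, abs_mul,
            abs_of_pos h0]
  -- assemble
  have hQdiff : (1/h) * (Q (c₂*h) - Q (c₁*h))
      = v x * (c₂ - c₁) + d1 * (c₂^2 - c₁^2)/2 * h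
        + d2 * (c₂^3 - c₁^3)/6 * h^2 + d3 * (c₂^4 - c₁^4)/24 * h^3 := by
    rw [hQ]
    field_simp
    ring
  have heq : (1/h) * (∫ t in A..B, v t)
      - (v x * (c₂ - c₁) + d1 * (c₂^2 - c₁^2)/2 * h
        + d2 * (c₂^3 - c₁^3)/6 * h^2 + d3 * (c₂^4 - c₁^4)/24 * h^3)
      = (1/h) * ∫ t in A..B, g0 (t - x) := by
    rw [hsplit, hpoly, mul_add, ← hQdiff]
    ring
  rw [heq]
  rw [norm_mul]
  calc ‖1/h‖ * ‖∫ t in A..B, g0 (t - x)‖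
      ≤ (1/h) * (max C 0 * (M*h)^4 * (|c₂ - c₁| * h)) := by
        rw [Real.norm_eq_abs, abs_of_pos (by positivity : (0:ℝ) < 1/h)]
        exact mul_le_mul_of_nonneg_left hbound (by positivity)
    _ = max C 0 * M^4 * |c₂ - c₁| * h^4 := by field_simp
    _ = max C 0 * M^4 * |c₂ - c₁| * ‖h^4‖ := by
        rw [Real.norm_eq_abs, abs_of_pos (pow_pos h0 4)]
lemma alg_identity (h u1 u2 u3 T : ℝ) (hne : h ≠ 0) (hdne : -u1 + 5*u2 + 2*u3 ≠ 0) :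
    (1/2 + 1/4 * (2 / h ^ 2 * ((-u1 + 2*u2 - u3) / (-u1 + 5*u2 + 2*u3))) * h ^ 2) * (u2 + u3) - T
      = ((u2 + u3) * (-2*u1 + 7*u2 + u3) - 2*(-u1 + 5*u2 + 2*u3) * T)
        * (2 * (-u1 + 5*u2 + 2*u3))⁻¹ := by
  obtain ⟨D, hD⟩ : ∃ D, D = -u1 + 5*u2 + 2*u3 := ⟨_, rfl⟩
  have hu1 : u1 = 5*u2 + 2*u3 - D := by linarith
  rw [← hD] at hdne ⊢
  subst hu1
  field_simp
  ring

/-- Third-order accuracy of the MQ-RBF-ENO reconstruction with the data-based shape parameter. -/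
theorem stmt_4 (v : ℝ → ℝ) (hv : ContDiff ℝ 4 v) (x : ℝ) (hvx : v x ≠ 0) :
    (fun Δx : ℝ =>
        (let vm1 := (1/Δx) * ∫ t in (x - 2*Δx)..(x - Δx), v t
         let v0 := (1/Δx) * ∫ t in (x - Δx)..x, v t
         let vp1 := (1/Δx) * ∫ t in x..(x + Δx), v t
         let e2 := (2 / Δx ^ 2) * ((-vm1 + 2*v0 - vp1) / (-vm1 + 5*v0 + 2*vp1))
         (1/2 + (1/4) * e2 * Δx ^ 2) * (v0 + vp1))
        - (v x + (1/12) * iteratedDeriv 3 v x * Δx ^ 3))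
      =O[nhdsWithin 0 (Set.Ioi 0)] (fun Δx : ℝ => Δx ^ 4) := by
  have hl : nhdsWithin (0:ℝ) (Set.Ioi 0) = 𝓝[>] (0:ℝ) := rfl
  rw [hl]
  set l := 𝓝[>] (0:ℝ) with hldef
  set d1 := deriv v x with hd1
  set d2 := iteratedDeriv 2 v x with hd2
  set d3 := iteratedDeriv 3 v x with hd3
  set a : ℝ → ℝ := fun h => (1/h) * ∫ t in (x - 2*h)..(x - h), v t with hadef
  set b : ℝ → ℝ := fun h => (1/h) * ∫ t in (x - h)..x, v t with hbdef
  set c : ℝ → ℝ := fun h => (1/h) * ∫ t in x..(x + h), v t with hcdef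
  set pa : ℝ → ℝ := fun h => v x * ((-1:ℝ) - (-2)) + d1 * ((-1:ℝ)^2 - (-2)^2)/2 * h
    + d2 * ((-1:ℝ)^3 - (-2)^3)/6 * h^2 + d3 * ((-1:ℝ)^4 - (-2)^4)/24 * h^3 with hpadef
  set pb : ℝ → ℝ := fun h => v x * ((0:ℝ) - (-1)) + d1 * ((0:ℝ)^2 - (-1)^2)/2 * h
    + d2 * ((0:ℝ)^3 - (-1)^3)/6 * h^2 + d3 * ((0:ℝ)^4 - (-1)^4)/24 * h^3 with hpbdef
  set pc : ℝ → ℝ := fun h => v x * ((1:ℝ) - 0) + d1 * ((1:ℝ)^2 - 0^2)/2 * h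
    + d2 * ((1:ℝ)^3 - 0^3)/6 * h^2 + d3 * ((1:ℝ)^4 - 0^4)/24 * h^3 with hpcdef
  -- expansions of the three cell averages
  have hEa : (fun h => a h - pa h) =O[l] (fun h => h^4) := by
    refine (avg_bigO v hv x (-2) (-1)).congr (fun h => ?_) (fun h => rfl)
    rw [show x + (-2:ℝ)*h = x - 2*h by ring, show x + (-1:ℝ)*h = x - h by ring,
      hadef, hpadef]
  have hEb : (fun h => b h - pb h) =O[l] (fun h => h^4) := by
    refine (avg_bigO v hv x (-1) 0).congr (fun h => ?_) (fun h => rfl)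
    rw [show x + (-1:ℝ)*h = x - h by ring, show x + (0:ℝ)*h = x by ring,
      hbdef, hpbdef]
  have hEc : (fun h => c h - pc h) =O[l] (fun h => h^4) := by
    refine (avg_bigO v hv x 0 1).congr (fun h => ?_) (fun h => rfl)
    rw [show x + (0:ℝ)*h = x by ring, show x + (1:ℝ)*h = x + h by ring,
      hcdef, hpcdef]
  -- basic limits
  have h4T : Tendsto (fun h : ℝ => h^4) l (𝓝 0) := by
    have := (continuous_pow 4).tendsto (0:ℝ)
    simpa using this.mono_left nhdsWithin_le_nhds
  have h4O1 : (fun h : ℝ => h^4) =O[l] (fun _ => (1:ℝ)) := h4T.isBigO_one ℝ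
  have hpaT : Tendsto pa l (𝓝 (v x)) := by
    have hc : Continuous pa := by rw [hpadef]; fun_prop
    have := (hc.tendsto 0).mono_left (nhdsWithin_le_nhds (s := Set.Ioi (0:ℝ)))
    have hval : pa 0 = v x := by rw [hpadef]; norm_num
    rwa [hval] at this
  have hpbT : Tendsto pb l (𝓝 (v x)) := by
    have hc : Continuous pb := by rw [hpbdef]; fun_prop
    have := (hc.tendsto 0).mono_left (nhdsWithin_le_nhds (s := Set.Ioi (0:ℝ)))
    have hval : pb 0 = v x := by rw [hpbdef]; norm_num
    rwa [hval] at this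
  have hpcT : Tendsto pc l (𝓝 (v x)) := by
    have hc : Continuous pc := by rw [hpcdef]; fun_prop
    have := (hc.tendsto 0).mono_left (nhdsWithin_le_nhds (s := Set.Ioi (0:ℝ)))
    have hval : pc 0 = v x := by rw [hpcdef]; norm_num
    rwa [hval] at this
  have haT : Tendsto a l (𝓝 (v x)) := by
    have h1 : Tendsto (fun h => a h - pa h) l (𝓝 0) := hEa.trans_tendsto h4T
    have := h1.add hpaT
    simpa using this
  have hbT : Tendsto b l (𝓝 (v x)) := by
    have h1 : Tendsto (fun h => b h - pb h) l (𝓝 0) := hEb.trans_tendsto h4T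
    have := h1.add hpbT
    simpa using this
  have hcT : Tendsto c l (𝓝 (v x)) := by
    have h1 : Tendsto (fun h => c h - pc h) l (𝓝 0) := hEc.trans_tendsto h4T
    have := h1.add hpcT
    simpa using this
  -- boundedness
  have haO1 : a =O[l] (fun _ => (1:ℝ)) := haT.isBigO_one ℝ
  have hbO1 : b =O[l] (fun _ => (1:ℝ)) := hbT.isBigO_one ℝ
  have hcO1 : c =O[l] (fun _ => (1:ℝ)) := hcT.isBigO_one ℝ
  -- denominator
  set den : ℝ → ℝ := fun h => -(a h) + 5 * b h + 2 * c h with hdendef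
  have hdenT : Tendsto den l (𝓝 (-(v x) + 5 * v x + 2 * v x)) :=
    (haT.neg.add (hbT.const_mul 5)).add (hcT.const_mul 2)
  have hlim_ne : -(v x) + 5 * v x + 2 * v x ≠ 0 := by
    intro hcontra
    apply hvx
    linarith
  have hden_ne : ∀ᶠ h in l, den h ≠ 0 := hdenT.eventually_ne hlim_ne
  have hinvO1 : (fun h => (2 * den h)⁻¹) =O[l] (fun _ => (1:ℝ)) := by
    have h2 : Tendsto (fun h => 2 * den h) l (𝓝 (2 * (-(v x) + 5 * v x + 2 * v x))) :=
      hdenT.const_mul 2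
    exact (h2.inv₀ (by simpa using hlim_ne)).isBigO_one ℝ
  -- the numerator N
  set N : ℝ → ℝ := fun h => (b h + c h) * (-2 * a h + 7 * b h + c h)
    - 2 * (-(a h) + 5 * b h + 2 * c h) * (v x + 1/12 * d3 * h^3) with hNdef
  -- helper: O(h^4) * O(1)
  have mul41 : ∀ (f g : ℝ → ℝ), f =O[l] (fun h => h^4) → g =O[l] (fun _ => (1:ℝ)) →
      (fun h => f h * g h) =O[l] (fun h => h^4) := by
    intro f g hf hg
    have := hf.mul hg
    simpa using this
  have hTO1 : (fun h : ℝ => v x + 1/12 * d3 * h^3) =O[l] (fun _ => (1:ℝ)) := by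
    have hc : Continuous (fun h : ℝ => v x + 1/12 * d3 * h^3) := by fun_prop
    exact ((hc.tendsto 0).mono_left nhdsWithin_le_nhds).isBigO_one ℝ
  have hLO1 : (fun h => -2 * a h + 7 * b h + c h) =O[l] (fun _ => (1:ℝ)) :=
    ((haO1.const_mul_left (-2)).add (hbO1.const_mul_left 7)).add hcO1
  have hSpO1 : (fun h => pb h + pc h) =O[l] (fun _ => (1:ℝ)) :=
    ((hpbT.add hpcT).mono_left le_rfl).isBigO_one ℝ
  have hQO1 : (fun h : ℝ => -(2*d2 - d3*h)^2/12) =O[l] (fun _ => (1:ℝ)) := by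
    have hc : Continuous (fun h : ℝ => -(2*d2 - d3*h)^2/12) := by fun_prop
    exact ((hc.tendsto 0).mono_left nhdsWithin_le_nhds).isBigO_one ℝ
  have t1 : (fun h => ((b h - pb h) + (c h - pc h)) * (-2 * a h + 7 * b h + c h))
      =O[l] (fun h => h^4) := mul41 _ _ (hEb.add hEc) hLO1
  have t2 : (fun h => (pb h + pc h) * (-2 * (a h - pa h) + 7 * (b h - pb h) + (c h - pc h)))
      =O[l] (fun h => h^4) := by
    have hcomb : (fun h => -2 * (a h - pa h) + 7 * (b h - pb h) + (c h - pc h))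
        =O[l] (fun h => h^4) :=
      ((hEa.const_mul_left (-2)).add (hEb.const_mul_left 7)).add hEc
    have := hSpO1.mul hcomb
    simpa using this
  have t3 : (fun h => 2 * (-(a h - pa h) + 5 * (b h - pb h) + 2 * (c h - pc h))
      * (v x + 1/12 * d3 * h^3)) =O[l] (fun h => h^4) := by
    have hcomb : (fun h => -(a h - pa h) + 5 * (b h - pb h) + 2 * (c h - pc h))
        =O[l] (fun h => h^4) :=
      ((hEa.neg_left).add (hEb.const_mul_left 5)).add (hEc.const_mul_left 2)
    have := mul41 _ _ (hcomb.const_mul_left 2) hTO1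
    simpa [mul_assoc] using this
  have t4 : (fun h : ℝ => h^4 * (-(2*d2 - d3*h)^2/12)) =O[l] (fun h => h^4) :=
    mul41 _ _ (isBigO_refl _ _) hQO1
  have hNsplit : ∀ h : ℝ, N h
      = ((b h - pb h) + (c h - pc h)) * (-2 * a h + 7 * b h + c h)
        + (pb h + pc h) * (-2 * (a h - pa h) + 7 * (b h - pb h) + (c h - pc h))
        - 2 * (-(a h - pa h) + 5 * (b h - pb h) + 2 * (c h - pc h)) * (v x + 1/12 * d3 * h^3)
        + h^4 * (-(2*d2 - d3*h)^2/12) := by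
    intro h
    rw [hNdef, hpadef, hpbdef, hpcdef]
    simp only
    ring
  have hN : N =O[l] (fun h => h^4) := by
    have comb := ((t1.add t2).sub t3).add t4
    exact comb.congr (fun h => (hNsplit h).symm) (fun h => rfl)
  have hO : (fun h => N h * (2 * den h)⁻¹) =O[l] (fun h => h^4) := mul41 _ _ hN hinvO1
  -- eventual equality with the goal function
  have key : (fun Δx : ℝ =>
        (let vm1 := (1/Δx) * ∫ t in (x - 2*Δx)..(x - Δx), v t
         let v0 := (1/Δx) * ∫ t in (x - Δx)..x, v t
         let vp1 := (1/Δx) * ∫ t in x..(x + Δx), v t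
         let e2 := (2 / Δx ^ 2) * ((-vm1 + 2*v0 - vp1) / (-vm1 + 5*v0 + 2*vp1))
         (1/2 + (1/4) * e2 * Δx ^ 2) * (v0 + vp1))
        - (v x + (1/12) * d3 * Δx ^ 3))
      =ᶠ[l] (fun h => N h * (2 * den h)⁻¹) := by
    filter_upwards [hden_ne, self_mem_nhdsWithin] with h hdne hh
    have h0 : (0:ℝ) < h := hh
    have hne : h ≠ 0 := ne_of_gt h0
    rw [hdendef, hadef, hbdef, hcdef] at hdne
    simp only at hdne
    simp only [hNdef, hdendef, hadef, hbdef, hcdef]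
    exact alg_identity h _ _ _ _ hne hdne
  exact hO.congr' key.symm EventuallyEq.rfl
end

section
/- With ε² chosen as ε² = (1/Δx²)·(−v̄_{i−1} + 2v̄_i − v̄_{i+1})/(−v̄_{i−1} + 5v̄_i + 2v̄_{i+1}), the Gaussian-RBF reconstruction p = (1/2 + (1/2)ε²Δx²)(v̄_i + v̄_{i+1}) satisfies p = v(x_{i+1/2}) + (1/12)v'''(x_{i+1/2})Δx³ + O(Δx⁴) for smooth v with v(x_{i+1/2}) ≠ 0. -/
open Filter Asymptotics

private lemma hasDerivAt_shift {w w' : ℝ → ℝ} (hw : ∀ y, HasDerivAt w (w' y) y) (x t : ℝ) :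
    HasDerivAt (fun s => w (x + s)) (w' (x + t)) t := by
  have h := (hw (x + t)).comp t ((hasDerivAt_id t).const_add x)
  simp only [mul_one] at h
  exact h

private lemma pow_isBigO_pow {m n : ℕ} (hmn : n ≤ m) :
    (fun t : ℝ => t ^ m) =O[nhds 0] fun t : ℝ => t ^ n := by
  have h1 : (fun t : ℝ => t ^ m) = fun t : ℝ => t ^ n * t ^ (m - n) := by
    funext t; rw [← pow_add]; congr 1; omega
  rw [h1]
  simpa using (isBigO_refl (fun t : ℝ => t ^ n) (nhds 0)).mul
    (((continuous_pow (m - n)).tendsto (0:ℝ)).isBigO_one ℝ)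

private lemma isBigO_succ_of_deriv {f f' : ℝ → ℝ} {k : ℕ}
    (hf : ∀ s, HasDerivAt f (f' s) s) (h0 : f 0 = 0)
    (hd : f' =O[nhds 0] fun t => t ^ k) :
    f =O[nhds 0] fun t => t ^ (k + 1) := by
  rcases hd.exists_nonneg with ⟨C, hC0, hC⟩
  rw [IsBigOWith] at hC
  rw [isBigO_iff]
  obtain ⟨r, hr, hball⟩ := Metric.eventually_nhds_iff_ball.mp hC
  refine ⟨C, Metric.eventually_nhds_iff_ball.mpr ⟨r, hr, ?_⟩⟩
  intro t ht
  have habs : |t| < r := by simpa [Real.dist_eq] using ht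
  have key : ∀ s ∈ segment ℝ (0:ℝ) t, ‖f' s‖ ≤ C * |t| ^ k := by
    intro s hs
    rw [segment_eq_uIcc] at hs
    have hst : |s| ≤ |t| := by
      rcases Set.mem_uIcc.mp hs with ⟨h1, h2⟩ | ⟨h1, h2⟩
      · rw [abs_of_nonneg h1, abs_of_nonneg (h1.trans h2)]; exact h2
      · rw [abs_of_nonpos h2, abs_of_nonpos (h2.trans' h1)]; linarith
    have hsball : s ∈ Metric.ball (0:ℝ) r := by
      simp [Real.dist_eq]
      exact lt_of_le_of_lt hst habs
    calc ‖f' s‖ ≤ C * ‖s ^ k‖ := hball s hsball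
      _ = C * |s| ^ k := by rw [Real.norm_eq_abs, abs_pow]
      _ ≤ C * |t| ^ k := by
          have := pow_le_pow_left₀ (abs_nonneg s) hst k
          nlinarith [pow_nonneg (abs_nonneg s) k]
  have := (convex_segment (0:ℝ) t).norm_image_sub_le_of_norm_hasDerivWithin_le
    (fun s _ => (hf s).hasDerivWithinAt) key (left_mem_segment ℝ 0 t) (right_mem_segment ℝ 0 t)
  rw [h0, sub_zero] at this
  calc ‖f t‖ ≤ C * |t| ^ k * ‖t - 0‖ := this
    _ = C * ‖t ^ (k+1)‖ := by
        rw [sub_zero, Real.norm_eq_abs, Real.norm_eq_abs, abs_pow, pow_succ]; ring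

private lemma mul_cont_isBigO {p q : ℝ → ℝ} (hq : Continuous q) {l : Filter ℝ}
    (hle : l ≤ nhds 0) : (fun h => p h * q h) =O[l] p := by
  simpa using (isBigO_refl p l).mul (((hq.tendsto 0).mono_left hle).isBigO_one ℝ)

private noncomputable def gg (v : ℝ → ℝ) (x t : ℝ) : ℝ := ∫ s in x..(x + t), v s

private noncomputable def PP (v : ℝ → ℝ) (x t : ℝ) : ℝ :=
  v x * t + iteratedDeriv 1 v x * t ^ 2 / 2 + iteratedDeriv 2 v x * t ^ 3 / 6
    + iteratedDeriv 3 v x * t ^ 4 / 24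

private noncomputable def rr (v : ℝ → ℝ) (x t : ℝ) : ℝ := gg v x t - PP v x t

private lemma taylor_aux (v : ℝ → ℝ) (hv : ContDiff ℝ 4 v) (x : ℝ) :
    (fun t => rr v x t) =O[nhds 0] fun t : ℝ => t ^ 5 := by
  have hcont : Continuous v := hv.continuous
  have hG : ∀ y : ℝ, HasDerivAt (fun u => ∫ s in x..u, v s) (v y) y := fun y =>
    intervalIntegral.integral_hasDerivAt_right (hcont.intervalIntegrable _ _)
      (hcont.stronglyMeasurableAtFilter _ _) hcont.continuousAt
  have D : ∀ k : ℕ, k < 4 → ∀ y : ℝ, HasDerivAt (iteratedDeriv k v) (iteratedDeriv (k+1) v y) y := by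
    intro k hk y
    have hd := (hv.differentiable_iteratedDeriv k (by exact_mod_cast hk) y).hasDerivAt
    rwa [← iteratedDeriv_succ] at hd
  set c1 := v x with hc1
  set c2 := iteratedDeriv 1 v x with hc2
  set c3 := iteratedDeriv 2 v x with hc3
  set c4 := iteratedDeriv 3 v x with hc4
  have h4 : (fun t => iteratedDeriv 3 v (x + t) - c4) =O[nhds 0] fun t : ℝ => t ^ 1 := by
    refine isBigO_succ_of_deriv (f' := fun t => iteratedDeriv 4 v (x + t))
      (fun s => (hasDerivAt_shift (D 3 (by norm_num)) x s).sub_const c4) (by simp [hc4]) ?_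
    have hcnt : Continuous fun t : ℝ => iteratedDeriv 4 v (x + t) :=
      (hv.continuous_iteratedDeriv 4 (by norm_num)).comp (continuous_const.add continuous_id)
    simpa using (hcnt.tendsto 0).isBigO_one ℝ
  have h3 : (fun t => iteratedDeriv 2 v (x + t) - c3 - c4 * t) =O[nhds 0] fun t : ℝ => t ^ 2 := by
    refine isBigO_succ_of_deriv (f' := fun t => iteratedDeriv 3 v (x + t) - c4)
      (fun s => ?_) (by simp [hc3]) h4
    have H := ((hasDerivAt_shift (D 2 (by norm_num)) x s).sub_const c3).sub
      ((hasDerivAt_id s).const_mul c4)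
    exact H.congr_deriv (by ring)
  have h2 : (fun t => iteratedDeriv 1 v (x + t) - c2 - c3 * t - c4 * t ^ 2 / 2)
      =O[nhds 0] fun t : ℝ => t ^ 3 := by
    refine isBigO_succ_of_deriv (f' := fun t => iteratedDeriv 2 v (x + t) - c3 - c4 * t)
      (fun s => ?_) (by simp [hc2]) h3
    have H := (((hasDerivAt_shift (D 1 (by norm_num)) x s).sub_const c2).sub
      ((hasDerivAt_id s).const_mul c3)).sub
      (((hasDerivAt_pow 2 s).const_mul c4).div_const 2)
    exact H.congr_deriv (by ring)
  have hv' : ∀ y : ℝ, HasDerivAt v (iteratedDeriv 1 v y) y := by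
    intro y
    have := D 0 (by norm_num) y
    rwa [iteratedDeriv_zero] at this
  have h1 : (fun t => v (x + t) - c1 - c2 * t - c3 * t ^ 2 / 2 - c4 * t ^ 3 / 6)
      =O[nhds 0] fun t : ℝ => t ^ 4 := by
    refine isBigO_succ_of_deriv
      (f' := fun t => iteratedDeriv 1 v (x + t) - c2 - c3 * t - c4 * t ^ 2 / 2)
      (fun s => ?_) (by simp [hc1]) h2
    have H := ((((hasDerivAt_shift hv' x s).sub_const c1).sub
      ((hasDerivAt_id s).const_mul c2)).sub
      (((hasDerivAt_pow 2 s).const_mul c3).div_const 2)).sub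
      (((hasDerivAt_pow 3 s).const_mul c4).div_const 6)
    exact H.congr_deriv (by ring)
  refine isBigO_succ_of_deriv
    (f' := fun t => v (x + t) - c1 - c2 * t - c3 * t ^ 2 / 2 - c4 * t ^ 3 / 6)
    (fun s => ?_) (by simp [rr, gg, PP]) h1
  have H := (hasDerivAt_shift hG x s).sub
    (((((hasDerivAt_id s).const_mul c1).add
      (((hasDerivAt_pow 2 s).const_mul c2).div_const 2)).add
      (((hasDerivAt_pow 3 s).const_mul c3).div_const 6)).add
      (((hasDerivAt_pow 4 s).const_mul c4).div_const 24))
  have hfun : (fun t => rr v x t)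
      = fun t => (fun u => ∫ s in x..u, v s) (x + t)
          - (c1 * t + c2 * t ^ 2 / 2 + c3 * t ^ 3 / 6 + c4 * t ^ 4 / 24) := by
    funext t; simp only [rr, gg, PP, ← hc1, ← hc2, ← hc3, ← hc4]
  rw [hfun]
  exact H.congr_deriv (by ring)

/-- Third-order accuracy of the Gaussian-RBF reconstruction with the data-based shape parameter. -/
theorem stmt_5 (v : ℝ → ℝ) (hv : ContDiff ℝ 4 v) (x : ℝ) (hvx : v x ≠ 0) :
    (fun Δx : ℝ =>
        (let vm1 := (1/Δx) * ∫ t in (x - 2*Δx)..(x - Δx), v t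
         let v0 := (1/Δx) * ∫ t in (x - Δx)..x, v t
         let vp1 := (1/Δx) * ∫ t in x..(x + Δx), v t
         let e2 := (1 / Δx ^ 2) * ((-vm1 + 2*v0 - vp1) / (-vm1 + 5*v0 + 2*vp1))
         (1/2 + (1/2) * e2 * Δx ^ 2) * (v0 + vp1))
        - (v x + (1/12) * iteratedDeriv 3 v x * Δx ^ 3))
      =O[nhdsWithin 0 (Set.Ioi 0)] (fun Δx : ℝ => Δx ^ 4) := by
  have hcont : Continuous v := hv.continuous
  set l := nhdsWithin (0:ℝ) (Set.Ioi 0) with hl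
  have hpos : ∀ᶠ h : ℝ in l, 0 < h := self_mem_nhdsWithin
  have hR : (fun t => rr v x t) =O[nhds 0] fun t : ℝ => t ^ 5 := taylor_aux v hv x
  -- composed remainder bounds
  have tneg : Tendsto (fun h : ℝ => -h) l (nhds 0) := by
    have := (continuous_neg.tendsto (0:ℝ)).mono_left (nhdsWithin_le_nhds (s := Set.Ioi 0))
    simpa using this
  have tneg2 : Tendsto (fun h : ℝ => -(2*h)) l (nhds 0) := by
    have : Continuous (fun h : ℝ => -(2*h)) := by continuity
    have := (this.tendsto (0:ℝ)).mono_left (nhdsWithin_le_nhds (s := Set.Ioi 0))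
    simpa using this
  have hR1 : (fun h : ℝ => rr v x h) =O[l] fun h => h ^ 5 := hR.mono nhdsWithin_le_nhds
  have hR2 : (fun h : ℝ => rr v x (-h)) =O[l] fun h => h ^ 5 := by
    have h1 := hR.comp_tendsto tneg
    simp only [Function.comp_def] at h1
    refine h1.trans ?_
    have he : (fun h : ℝ => (-h) ^ 5) = fun h : ℝ => -(h ^ 5) := by funext h0; ring
    rw [he]
    exact (isBigO_refl _ _).neg_left
  have hR3 : (fun h : ℝ => rr v x (-(2*h))) =O[l] fun h => h ^ 5 := by
    have h1 := hR.comp_tendsto tneg2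
    simp only [Function.comp_def] at h1
    refine h1.trans ?_
    have he : (fun h : ℝ => (-(2*h)) ^ 5) = fun h : ℝ => (-32) * h ^ 5 := by funext h0; ring
    rw [he]
    exact isBigO_const_mul_self (-32) _ _
  -- the denominator combination
  have hDuEq : ∀ h : ℝ, (2 * gg v x h - 6 * gg v x (-h) + gg v x (-(2*h))) - 6 * v x * h
      = (1/2) * iteratedDeriv 3 v x * h ^ 4
        + (2 * rr v x h - 6 * rr v x (-h) + rr v x (-(2*h))) := by
    intro h
    simp only [rr, PP]
    ring
  have hDu4 : (fun h : ℝ => (2 * gg v x h - 6 * gg v x (-h) + gg v x (-(2*h))) - 6 * v x * h)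
      =O[l] fun h => h ^ 2 := by
    have e1 : (fun h : ℝ => (1/2) * iteratedDeriv 3 v x * h ^ 4) =O[l] fun h => h ^ 2 := by
      refine IsBigO.trans ?_ ((pow_isBigO_pow (by norm_num : 2 ≤ 4)).mono nhdsWithin_le_nhds)
      exact isBigO_const_mul_self _ _ _
    have e2 : (fun h : ℝ => 2 * rr v x h - 6 * rr v x (-h) + rr v x (-(2*h)))
        =O[l] fun h => h ^ 2 := by
      refine IsBigO.trans ?_ ((pow_isBigO_pow (by norm_num : 2 ≤ 5)).mono nhdsWithin_le_nhds)
      exact (((hR1.const_mul_left 2).sub (hR2.const_mul_left 6)).add hR3)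
    simp only [hDuEq]
    exact e1.add e2
  -- tendsto of the scaled denominator
  have hq : Tendsto (fun h : ℝ => (2 * gg v x h - 6 * gg v x (-h) + gg v x (-(2*h))) / h)
      l (nhds (6 * v x)) := by
    rw [← tendsto_sub_nhds_zero_iff]
    have he : (fun h : ℝ => (2 * gg v x h - 6 * gg v x (-h) + gg v x (-(2*h))) / h - 6 * v x)
        =ᶠ[l] fun h => ((2 * gg v x h - 6 * gg v x (-h) + gg v x (-(2*h))) - 6 * v x * h) * h⁻¹ := by
      filter_upwards [hpos] with h hh
      have h0 : h ≠ 0 := ne_of_gt hh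
      field_simp
    have hb : (fun h : ℝ => ((2 * gg v x h - 6 * gg v x (-h) + gg v x (-(2*h))) - 6 * v x * h) * h⁻¹)
        =O[l] fun h => h ^ 2 * h⁻¹ := hDu4.mul (isBigO_refl _ _)
    have he2 : (fun h : ℝ => h ^ 2 * h⁻¹) =ᶠ[l] fun h => h := by
      filter_upwards [hpos] with h hh
      have h0 : h ≠ 0 := ne_of_gt hh
      field_simp
    have := (he.trans_isBigO (hb.trans he2.isBigO))
    exact this.trans_tendsto (tendsto_id.mono_left nhdsWithin_le_nhds)
  have hne : ∀ᶠ h : ℝ in l, (2 * gg v x h - 6 * gg v x (-h) + gg v x (-(2*h))) ≠ 0 := by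
    have h6 : (6 : ℝ) * v x ≠ 0 := by simpa using hvx
    filter_upwards [hq.eventually_ne h6] with h hh
    intro h0
    rw [h0] at hh
    simp at hh
  -- decomposition of the cleared numerator
  have hEdec : (fun h : ℝ =>
      (gg v x h - gg v x (-h)) * (gg v x h - 9 * gg v x (-h) + 2 * gg v x (-(2*h)))
        - 2 * h * (2 * gg v x h - 6 * gg v x (-h) + gg v x (-(2*h)))
            * (v x + 1/12 * iteratedDeriv 3 v x * h ^ 3))
      = fun h : ℝ =>
        h ^ 6 * (-(iteratedDeriv 2 v x)^2/3 + iteratedDeriv 2 v x * iteratedDeriv 3 v x * h/3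
          - (iteratedDeriv 3 v x)^2 * h^2/12)
        + (2 * v x * h + 1/3 * iteratedDeriv 2 v x * h^3)
            * (rr v x h - 9 * rr v x (-h) + 2 * rr v x (-(2*h)))
        + (rr v x h - rr v x (-h))
            * (6 * v x * h - iteratedDeriv 2 v x * h^3 + iteratedDeriv 3 v x * h^4)
        + (rr v x h - rr v x (-h)) * (rr v x h - 9 * rr v x (-h) + 2 * rr v x (-(2*h)))
        - 2 * h * (v x + 1/12 * iteratedDeriv 3 v x * h ^ 3)
            * (2 * rr v x h - 6 * rr v x (-h) + rr v x (-(2*h))) := by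
    funext h
    simp only [rr, PP]
    ring
  have hpow15 : (fun h : ℝ => h * h ^ 5) = fun h : ℝ => h ^ 6 := by funext h; ring
  have hrB : (fun h : ℝ => rr v x h - 9 * rr v x (-h) + 2 * rr v x (-(2*h)))
      =O[l] fun h => h ^ 5 := (hR1.sub (hR2.const_mul_left 9)).add (hR3.const_mul_left 2)
  have hrA : (fun h : ℝ => rr v x h - rr v x (-h)) =O[l] fun h => h ^ 5 := hR1.sub hR2
  have hrC : (fun h : ℝ => 2 * rr v x h - 6 * rr v x (-h) + rr v x (-(2*h)))
      =O[l] fun h => h ^ 5 := (hR1.const_mul_left 2).sub (hR2.const_mul_left 6) |>.add hR3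
  have bigE : (fun h : ℝ =>
      (gg v x h - gg v x (-h)) * (gg v x h - 9 * gg v x (-h) + 2 * gg v x (-(2*h)))
        - 2 * h * (2 * gg v x h - 6 * gg v x (-h) + gg v x (-(2*h)))
            * (v x + 1/12 * iteratedDeriv 3 v x * h ^ 3))
      =O[l] fun h => h ^ 6 := by
    rw [hEdec]
    have t1 : (fun h : ℝ => h ^ 6 * (-(iteratedDeriv 2 v x)^2/3
        + iteratedDeriv 2 v x * iteratedDeriv 3 v x * h/3
        - (iteratedDeriv 3 v x)^2 * h^2/12)) =O[l] fun h => h ^ 6 :=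
      mul_cont_isBigO (by fun_prop) nhdsWithin_le_nhds
    have hA : (fun h : ℝ => 2 * v x * h + 1/3 * iteratedDeriv 2 v x * h^3) =O[l] fun h => h := by
      have he : (fun h : ℝ => 2 * v x * h + 1/3 * iteratedDeriv 2 v x * h^3)
          = fun h : ℝ => h * (2 * v x + 1/3 * iteratedDeriv 2 v x * h^2) := by funext h; ring
      rw [he]
      exact mul_cont_isBigO (by fun_prop) nhdsWithin_le_nhds
    have t2 := (hA.mul hrB)
    rw [hpow15] at t2
    have hB : (fun h : ℝ => 6 * v x * h - iteratedDeriv 2 v x * h^3 + iteratedDeriv 3 v x * h^4)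
        =O[l] fun h => h := by
      have he : (fun h : ℝ => 6 * v x * h - iteratedDeriv 2 v x * h^3 + iteratedDeriv 3 v x * h^4)
          = fun h : ℝ => h * (6 * v x - iteratedDeriv 2 v x * h^2 + iteratedDeriv 3 v x * h^3) := by
        funext h; ring
      rw [he]
      exact mul_cont_isBigO (by fun_prop) nhdsWithin_le_nhds
    have t3 := (hrA.mul hB)
    have hpow51 : (fun h : ℝ => h ^ 5 * h) = fun h : ℝ => h ^ 6 := by funext h; ring
    rw [hpow51] at t3
    have hpow55 : (fun h : ℝ => h ^ 5 * h ^ 5) = fun h : ℝ => h ^ 10 := by funext h; ring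
    have t4 := (hrA.mul hrB)
    rw [hpow55] at t4
    replace t4 := t4.trans ((pow_isBigO_pow (by norm_num : 6 ≤ 10)).mono nhdsWithin_le_nhds)
    have h2hT : (fun h : ℝ => 2 * h * (v x + 1/12 * iteratedDeriv 3 v x * h ^ 3))
        =O[l] fun h => h := by
      have he : (fun h : ℝ => 2 * h * (v x + 1/12 * iteratedDeriv 3 v x * h ^ 3))
          = fun h : ℝ => h * (2 * (v x + 1/12 * iteratedDeriv 3 v x * h ^ 3)) := by funext h; ring
      rw [he]
      exact mul_cont_isBigO (by fun_prop) nhdsWithin_le_nhds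
    have t5 := (h2hT.mul hrC)
    rw [hpow15] at t5
    exact (((t1.add t2).add t3).add t4).sub t5
  -- final assembly
  have hqinv : Tendsto (fun h : ℝ =>
      (2 * ((2 * gg v x h - 6 * gg v x (-h) + gg v x (-(2*h))) / h))⁻¹)
      l (nhds ((2 * (6 * v x))⁻¹)) :=
    (hq.const_mul 2).inv₀ (by simp [hvx])
  have step1 : (fun h : ℝ =>
      (2 * ((2 * gg v x h - 6 * gg v x (-h) + gg v x (-(2*h))) / h))⁻¹)
      =O[l] (1 : ℝ → ℝ) := hqinv.isBigO_one ℝ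
  have big2 := bigE.mul (step1.mul (isBigO_refl (fun h : ℝ => (h ^ 2)⁻¹) l))
  have rhs_eq : (fun h : ℝ => h ^ 6 * ((1 : ℝ → ℝ) h * (h ^ 2)⁻¹)) =ᶠ[l] fun h : ℝ => h ^ 4 := by
    filter_upwards [hpos] with h hh
    have h0 : h ≠ 0 := ne_of_gt hh
    simp only [Pi.one_apply, one_mul]
    field_simp
  have final := big2.trans rhs_eq.isBigO
  refine EventuallyEq.trans_isBigO ?_ final
  filter_upwards [hpos, hne] with h hh hD0
  have h0 : h ≠ 0 := ne_of_gt hh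
  have i3 : (∫ t in x..(x + h), v t) = gg v x h := rfl
  have i2 : (∫ t in (x - h)..x, v t) = -gg v x (-h) := by
    rw [show x - h = x + -h by ring, intervalIntegral.integral_symm]
    simp only [gg]
  have i1 : (∫ t in (x - 2*h)..(x - h), v t) = gg v x (-h) - gg v x (-(2*h)) := by
    have hs := intervalIntegral.integral_interval_sub_left
      (hcont.intervalIntegrable (μ := MeasureTheory.volume) x (x + -h))
      (hcont.intervalIntegrable (μ := MeasureTheory.volume) x (x + -(2*h)))
    rw [show x - 2*h = x + -(2*h) by ring, show x - h = x + -h by ring]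
    simp only [gg]
    exact hs.symm
  simp only [i1, i2, i3]
  have hDex : (-(1 / h * (gg v x (-h) - gg v x (-(2 * h)))) + 5 * (1 / h * -gg v x (-h)) +
      2 * (1 / h * gg v x h)) = (2 * gg v x h - 6 * gg v x (-h) + gg v x (-(2 * h))) / h := by
    field_simp
    ring
  rw [hDex]
  generalize gg v x h = a at *
  generalize gg v x (-h) = b at *
  generalize gg v x (-(2*h)) = c at *
  generalize hd : 2 * a - 6 * b + c = d at *
  field_simp
  subst hd
  ring
end

section
/- Choosing ε² so that the exact MQ coefficient relation ε² = −(1/3)v''(x_{i+1/2})/v(x_{i+1/2}) holds (with v(x_{i+1/2}) ≠ 0), the exact MQ-RBF reconstruction v⁻_{i+1/2} = c(ε)(v̄_i + v̄_{i+1}) with c(ε) = (√(4ε²Δx²+1)+1)/(4√(ε²Δx²+1)) satisfies v⁻_{i+1/2} = v(x_{i+1/2}) + O(Δx⁴). -/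
open Filter Asymptotics intervalIntegral

private lemma aux_contDiffAt_deriv {n : ℕ} {f : ℝ → ℝ} (hf : ContDiffAt ℝ (n + 1) f 0) :
    ContDiffAt ℝ n (deriv f) 0 := by
  obtain ⟨u, hu, hfu⟩ := hf.contDiffOn le_rfl (by simp)
  obtain ⟨t, htu, ht, h0t⟩ := mem_nhds_iff.mp hu
  have h : ContDiffOn ℝ n (deriv f) t :=
    (hfu.mono htu).deriv_of_isOpen ht (by exact_mod_cast le_rfl)
  exact h.contDiffAt (ht.mem_nhds h0t)

private lemma aux_taylor_isBigO : ∀ (n : ℕ) (f : ℝ → ℝ), ContDiffAt ℝ n f 0 →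
    (∀ k, k < n → iteratedDeriv k f 0 = 0) → f =O[nhds 0] fun x : ℝ => x ^ n := by
  intro n
  induction n with
  | zero =>
    intro f hf _
    simpa using hf.continuousAt.tendsto.isBigO_one ℝ
  | succ n ih =>
    intro f hf h0
    have hd : ContDiffAt ℝ n (deriv f) 0 := aux_contDiffAt_deriv hf
    have ihd : deriv f =O[nhds 0] fun x : ℝ => x ^ n := by
      refine ih (deriv f) hd fun k hk => ?_
      rw [← iteratedDeriv_succ']
      exact h0 (k + 1) (by omega)
    obtain ⟨C, hCpos, hC⟩ := ihd.exists_pos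
    have hC' := hC.bound
    have hdiff : ∀ᶠ y in nhds (0 : ℝ), DifferentiableAt ℝ f y := by
      filter_upwards [hf.eventually (by simp)] with y hy
      exact hy.differentiableAt (by simp)
    obtain ⟨r, hr, hball⟩ := Metric.eventually_nhds_iff_ball.mp (hC'.and hdiff)
    have hf0 : f 0 = 0 := by
      have := h0 0 (Nat.succ_pos n); rwa [iteratedDeriv_zero] at this
    rw [isBigO_iff]
    refine ⟨C, Metric.eventually_nhds_iff_ball.mpr ⟨r, hr, fun y hy => ?_⟩⟩
    have hsub : Set.uIcc (0 : ℝ) y ⊆ Metric.ball (0 : ℝ) r := by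
      intro t ht
      have hty : |t| ≤ |y| := by
        rcases Set.mem_uIcc.mp ht with ⟨h1, h2⟩ | ⟨h1, h2⟩ <;> rw [abs_le] <;>
          constructor <;> rcases abs_cases y with ⟨e, he⟩ | ⟨e, he⟩ <;> linarith
      have : |y| < r := by simpa [Real.dist_eq] using hy
      simpa [Real.dist_eq] using lt_of_le_of_lt hty this
    have key : ‖f y - f 0‖ ≤ C * |y| ^ n * ‖y - 0‖ := by
      refine Convex.norm_image_sub_le_of_norm_deriv_le (fun t ht => ((hball t (hsub ht)).2))
        (fun t ht => ?_) (convex_uIcc 0 y) (Set.left_mem_uIcc) (Set.right_mem_uIcc)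
      have h1 := (hball t (hsub ht)).1
      have hty : |t| ≤ |y| := by
        rcases Set.mem_uIcc.mp ht with ⟨h1, h2⟩ | ⟨h1, h2⟩ <;> rw [abs_le] <;>
          constructor <;> rcases abs_cases y with ⟨e, he⟩ | ⟨e, he⟩ <;> linarith
      calc ‖deriv f t‖ ≤ C * ‖t ^ n‖ := h1
        _ = C * |t| ^ n := by rw [norm_pow]; rfl
        _ ≤ C * |y| ^ n := by
            exact mul_le_mul_of_nonneg_left (pow_le_pow_left₀ (abs_nonneg t) hty n) hCpos.le
    rw [hf0, sub_zero] at key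
    calc ‖f y‖ ≤ C * |y| ^ n * ‖y - 0‖ := key
      _ = C * ‖y ^ (n + 1)‖ := by
          rw [sub_zero, norm_pow]
          show C * ‖y‖ ^ n * ‖y‖ = C * ‖y‖ ^ (n+1)
          ring


/-- Fourth-order accuracy of the exact MQ-RBF reconstruction with the optimal shape parameter. -/
theorem stmt_8 (v : ℝ → ℝ) (hv : ContDiff ℝ 6 v) (x : ℝ) (hvx : v x ≠ 0)
    (e2 : ℝ) (he2 : e2 = -(1/3) * iteratedDeriv 2 v x / v x) :
    (fun Δx : ℝ =>
        ((Real.sqrt (4 * e2 * Δx ^ 2 + 1) + 1) / (4 * Real.sqrt (e2 * Δx ^ 2 + 1)))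
          * (((1/Δx) * ∫ t in (x - Δx)..x, v t) + ((1/Δx) * ∫ t in x..(x + Δx), v t))
        - v x)
      =O[nhdsWithin 0 (Set.Ioi 0)] (fun Δx : ℝ => Δx ^ 4) := by
  set a := iteratedDeriv 2 v x with ha
  have hevx : e2 * v x = -(a/3) := by rw [he2]; field_simp
  -- derivatives of v
  have hvd : Differentiable ℝ v := hv.differentiable (by norm_num)
  have hv5 : ContDiff ℝ 5 (deriv v) := by
    have h6 : ContDiff ℝ (5+1) v := by norm_num; exact hv
    exact (contDiff_succ_iff_deriv.mp h6).2.2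
  have hv1d : Differentiable ℝ (deriv v) := hv5.differentiable (by norm_num)
  have hv4 : ContDiff ℝ 4 (deriv (deriv v)) := by
    have h5 : ContDiff ℝ (4+1) (deriv v) := by norm_num; exact hv5
    exact (contDiff_succ_iff_deriv.mp h5).2.2
  have hv2d : Differentiable ℝ (deriv (deriv v)) := hv4.differentiable (by norm_num)
  have ha2 : a = deriv (deriv v) x := by
    rw [ha, show (2:ℕ) = 1+1 from rfl, iteratedDeriv_succ, iteratedDeriv_one]
  -- antiderivative
  set V : ℝ → ℝ := fun y => ∫ t in x..y, v t with hV
  have hVd : ∀ y, HasDerivAt V (v y) y := fun y =>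
    integral_hasDerivAt_right (hv.continuous.intervalIntegrable _ _)
      hv.continuous.aestronglyMeasurable.stronglyMeasurableAtFilter
      hv.continuous.continuousAt
  have hV7 : ContDiff ℝ 7 V := by
    have h7 : (7 : WithTop ℕ∞) = 6 + 1 := by norm_num
    rw [h7, contDiff_succ_iff_deriv]
    refine ⟨fun y => (hVd y).differentiableAt, by simp, ?_⟩
    have : deriv V = v := funext fun y => (hVd y).deriv
    rw [this]; exact hv
  -- the centered remainder
  set Wt : ℝ → ℝ := fun s => V (x+s) - V (x-s) - (2 * v x * s + a/3 * s^3) with hWt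
  set g1 : ℝ → ℝ := fun s => v (x+s) + v (x-s) - (2 * v x + a * s^2) with hg1
  set g2 : ℝ → ℝ := fun s => deriv v (x+s) - deriv v (x-s) - 2*a*s with hg2
  set g3 : ℝ → ℝ := fun s => deriv (deriv v) (x+s) + deriv (deriv v) (x-s) - 2*a with hg3
  have comp_add : ∀ (g g' : ℝ → ℝ), (∀ y, HasDerivAt g (g' y) y) → ∀ s : ℝ,
      HasDerivAt (fun t => g (x + t)) (g' (x + s)) s := fun g g' hg s => by
    simpa [Function.comp_def] using (hg (x + s)).comp s ((hasDerivAt_id s).const_add x)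
  have comp_sub : ∀ (g g' : ℝ → ℝ), (∀ y, HasDerivAt g (g' y) y) → ∀ s : ℝ,
      HasDerivAt (fun t => g (x - t)) (-g' (x - s)) s := fun g g' hg s => by
    simpa [Function.comp_def] using (hg (x - s)).comp s ((hasDerivAt_id s).const_sub x)
  have e1 : deriv Wt = g1 := by
    funext s
    have h1 := comp_add V v hVd s
    have h2 := comp_sub V v hVd s
    have h3 : HasDerivAt (fun t : ℝ => 2 * v x * t + a/3 * t^3) (2 * v x + a * s^2) s := by
      have := (((hasDerivAt_id s).const_mul (2 * v x)).add
        ((hasDerivAt_pow 3 s).const_mul (a/3)))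
      refine this.congr_deriv ?_
      push_cast; ring
    have := (h1.sub h2).sub h3
    have heq : deriv Wt s = _ := this.deriv
    rw [heq]; rw [hg1]; ring
  have e2' : deriv g1 = g2 := by
    funext s
    have h1 := comp_add v (deriv v) (fun y => (hvd y).hasDerivAt) s
    have h2 := comp_sub v (deriv v) (fun y => (hvd y).hasDerivAt) s
    have h3 : HasDerivAt (fun t : ℝ => 2 * v x + a * t^2) (2*a*s) s := by
      have := ((hasDerivAt_pow 2 s).const_mul a).const_add (2 * v x)
      refine this.congr_deriv ?_
      push_cast; ring
    have := (h1.add h2).sub h3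
    rw [show deriv g1 s = _ from this.deriv, hg2]; ring
  have e3' : deriv g2 = g3 := by
    funext s
    have h1 := comp_add (deriv v) (deriv (deriv v)) (fun y => (hv1d y).hasDerivAt) s
    have h2 := comp_sub (deriv v) (deriv (deriv v)) (fun y => (hv1d y).hasDerivAt) s
    have h3 : HasDerivAt (fun t : ℝ => 2*a*t) (2*a) s := by
      simpa using (hasDerivAt_id s).const_mul (2*a)
    have := (h1.sub h2).sub h3
    rw [show deriv g2 s = _ from this.deriv, hg3]; ring
  have e4' : deriv g3 = fun s => deriv (deriv (deriv v)) (x+s) - deriv (deriv (deriv v)) (x-s) := by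
    funext s
    have h1 := comp_add (deriv (deriv v)) (deriv (deriv (deriv v)))
      (fun y => (hv2d y).hasDerivAt) s
    have h2 := comp_sub (deriv (deriv v)) (deriv (deriv (deriv v)))
      (fun y => (hv2d y).hasDerivAt) s
    have := (h1.add h2).sub_const (2*a)
    rw [show deriv g3 s = _ from this.deriv]; ring
  -- smoothness of Wt
  have hWt5 : ContDiff ℝ 5 Wt := by
    have hcomp1 : ContDiff ℝ 5 (fun s : ℝ => V (x+s)) :=
      (hV7.of_le (by norm_num)).comp (contDiff_const.add contDiff_id)
    have hcomp2 : ContDiff ℝ 5 (fun s : ℝ => V (x-s)) :=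
      (hV7.of_le (by norm_num)).comp (contDiff_const.sub contDiff_id)
    exact (hcomp1.sub hcomp2).sub
      ((contDiff_const.mul contDiff_id).add (contDiff_const.mul (contDiff_id.pow 3)))
  have I1 : iteratedDeriv 1 Wt = g1 := by rw [iteratedDeriv_one, e1]
  have I2 : iteratedDeriv 2 Wt = g2 := by
    rw [show (2:ℕ) = 1+1 from rfl, iteratedDeriv_succ, I1, e2']
  have I3 : iteratedDeriv 3 Wt = g3 := by
    rw [show (3:ℕ) = 2+1 from rfl, iteratedDeriv_succ, I2, e3']
  have I4 : iteratedDeriv 4 Wt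
      = fun s => deriv (deriv (deriv v)) (x+s) - deriv (deriv (deriv v)) (x-s) := by
    rw [show (4:ℕ) = 3+1 from rfl, iteratedDeriv_succ, I3, e4']
  have hWtO : Wt =O[nhds 0] fun s : ℝ => s^5 := by
    apply aux_taylor_isBigO 5 Wt (by exact_mod_cast hWt5.contDiffAt)
    intro k hk
    interval_cases k
    · rw [iteratedDeriv_zero, hWt]; simp
    · rw [I1, hg1]; simp; ring
    · rw [I2, hg2]; simp
    · rw [I3, hg3]; simp only []; rw [ha2]; norm_num; ring
    · rw [I4]; simp
  -- shape-parameter function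
  set ht : ℝ → ℝ :=
    fun u => (Real.sqrt (4*u+1)+1)/(4*Real.sqrt (u+1)) - 1/2 - u/4 with hht
  have hht2 : ContDiffAt ℝ (2:ℕ) ht 0 := by
    rw [hht]
    have s1 : ContDiffAt ℝ (2:ℕ) (fun u : ℝ => Real.sqrt (4*u+1)) 0 := by
      apply ContDiffAt.sqrt _ (by norm_num)
      exact ((contDiff_const.mul contDiff_id).add contDiff_const).contDiffAt
    have s2 : ContDiffAt ℝ (2:ℕ) (fun u : ℝ => Real.sqrt (u+1)) 0 := by
      apply ContDiffAt.sqrt _ (by norm_num)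
      exact (contDiff_id.add contDiff_const).contDiffAt
    have num : ContDiffAt ℝ (2:ℕ) (fun u : ℝ => Real.sqrt (4*u+1)+1) 0 := s1.add contDiffAt_const
    have den : ContDiffAt ℝ (2:ℕ) (fun u : ℝ => 4*Real.sqrt (u+1)) 0 := contDiffAt_const.mul s2
    have hden : (4:ℝ)*Real.sqrt (0+1) ≠ 0 := by norm_num
    exact ((num.div den hden).sub contDiffAt_const).sub ((contDiff_id.div_const 4).contDiffAt)
  have hht0 : ht 0 = 0 := by rw [hht]; norm_num
  have hhtd : HasDerivAt ht 0 0 := by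
    have i1 : HasDerivAt (fun u : ℝ => 4*u+1) 4 0 := by
      simpa using ((hasDerivAt_id (0:ℝ)).const_mul 4).add_const 1
    have i2 : HasDerivAt (fun u : ℝ => u+1) 1 0 := by
      simpa using (hasDerivAt_id (0:ℝ)).add_const 1
    have n1 : HasDerivAt (fun u : ℝ => Real.sqrt (4*u+1)) 2 0 := by
      have := (Real.hasDerivAt_sqrt (show (4*(0:ℝ)+1) ≠ 0 by norm_num)).comp 0 i1
      refine this.congr_deriv ?_
      norm_num
    have n2 : HasDerivAt (fun u : ℝ => Real.sqrt (u+1)) (1/2) 0 := by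
      have := (Real.hasDerivAt_sqrt (show ((0:ℝ)+1) ≠ 0 by norm_num)).comp 0 i2
      refine this.congr_deriv ?_
      norm_num
    have num : HasDerivAt (fun u : ℝ => Real.sqrt (4*u+1)+1) 2 0 := n1.add_const 1
    have den : HasDerivAt (fun u : ℝ => 4*Real.sqrt (u+1)) 2 0 := by
      have := n2.const_mul 4; norm_num at this; exact this
    have hden : (4:ℝ)*Real.sqrt ((0:ℝ)+1) ≠ 0 := by norm_num
    have q := num.div den hden
    have r := (q.sub_const (1/2)).sub ((hasDerivAt_id (0:ℝ)).div_const 4)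
    rw [hht]
    refine r.congr_deriv ?_
    norm_num [Real.sqrt_one]
  have hhtO : ht =O[nhds 0] fun u : ℝ => u^2 := by
    apply aux_taylor_isBigO 2 ht hht2
    intro k hk
    interval_cases k
    · rw [iteratedDeriv_zero]; exact hht0
    · rw [iteratedDeriv_one]; exact hhtd.deriv
  have hq : Tendsto (fun s : ℝ => e2 * s^2) (nhds 0) (nhds 0) := by
    have hcq : Continuous (fun s : ℝ => e2 * s^2) := continuous_const.mul (continuous_pow 2)
    simpa using hcq.tendsto 0
  have hc4 : (fun s : ℝ => ht (e2 * s^2)) =O[nhds 0] fun s : ℝ => s^4 := by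
    refine (hhtO.comp_tendsto hq).trans ?_
    have he : ((fun u : ℝ => u^2) ∘ fun s : ℝ => e2*s^2) = fun s : ℝ => e2^2 * s^4 := by
      funext s; simp [Function.comp]; ring
    rw [he]
    exact (isBigO_refl (fun s : ℝ => s^4) _).const_mul_left _
  -- final assembly
  set l := nhdsWithin (0:ℝ) (Set.Ioi 0) with hl
  set c : ℝ → ℝ :=
    fun s => (Real.sqrt (4*e2*s^2+1)+1)/(4*Real.sqrt (e2*s^2+1)) with hcdef
  have hcont_c : ContinuousAt c 0 := by
    rw [hcdef]
    have hin1 : Continuous (fun s : ℝ => 4*e2*s^2+1) :=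
      (continuous_const.mul (continuous_pow 2)).add continuous_const
    have hin2 : Continuous (fun s : ℝ => e2*s^2+1) :=
      (continuous_const.mul (continuous_pow 2)).add continuous_const
    apply ContinuousAt.div
    · exact ((Real.continuous_sqrt.comp hin1).add continuous_const).continuousAt
    · exact (continuous_const.mul (Real.continuous_sqrt.comp hin2)).continuousAt
    · norm_num
  have hc1 : c =O[l] (fun _ : ℝ => (1:ℝ)) :=
    (hcont_c.tendsto.isBigO_one ℝ).mono nhdsWithin_le_nhds
  have h14 : (fun s : ℝ => (1/s) * Wt s) =O[l] fun s : ℝ => s^4 := by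
    have h1 : (fun s : ℝ => (1/s) * Wt s) =O[l] fun s : ℝ => (1/s) * s^5 :=
      (isBigO_refl (fun s : ℝ => 1/s) l).mul (hWtO.mono nhdsWithin_le_nhds)
    refine h1.trans_eventuallyEq ?_
    filter_upwards [self_mem_nhdsWithin] with s hs
    have hsne : s ≠ 0 := ne_of_gt hs
    field_simp
  have part1 : (fun s : ℝ => c s * ((1/s) * Wt s)) =O[l] fun s : ℝ => s^4 := by
    have := hc1.mul h14
    simpa using this
  have hP : (fun s : ℝ => 2 * v x + a/3 * s^2) =O[l] (fun _ : ℝ => (1:ℝ)) := by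
    have hcP : Continuous (fun s : ℝ => 2 * v x + a/3 * s^2) :=
      continuous_const.add (continuous_const.mul (continuous_pow 2))
    exact ((hcP.tendsto 0).isBigO_one ℝ).mono nhdsWithin_le_nhds
  have part2 : (fun s : ℝ => ht (e2 * s^2) * (2 * v x + a/3 * s^2)) =O[l] fun s : ℝ => s^4 := by
    have := (hc4.mono nhdsWithin_le_nhds).mul hP
    simpa using this
  have part3 : (fun s : ℝ => (e2*a/12) * s^4) =O[l] fun s : ℝ => s^4 :=
    (isBigO_refl _ _).const_mul_left _
  have hsum := (part1.add part2).add part3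
  refine hsum.congr' ?_ EventuallyEq.rfl
  filter_upwards [self_mem_nhdsWithin] with s hs
  have hsne : s ≠ 0 := ne_of_gt hs
  have hint1 : (∫ t in (x - s)..x, v t) = -(V (x - s)) := by
    rw [hV]
    simp only []
    rw [integral_symm]
  have hint2 : (∫ t in x..(x + s), v t) = V (x + s) := by rw [hV]
  simp only [hcdef, hWt, hht]
  rw [hint1, hint2]
  rw [show 4*(e2*s^2)+1 = 4*e2*s^2+1 from by ring]
  set K := (Real.sqrt (4*e2*s^2+1)+1)/(4*Real.sqrt (e2*s^2+1)) with hK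
  set P := V (x + s) with hPP
  set M := V (x - s) with hM
  have hsplit : (1/s)*(P - M - (2*v x*s + a/3*s^3)) = (1/s)*(P-M) - (2*v x + a/3*s^2) := by
    field_simp
  rw [hsplit]
  linear_combination (-(s^2)/2) * hevx
end

section
/- Let p be the unique polynomial of degree ≤ 2 whose averages over [0,Δx], [Δx,2Δx], [2Δx,3Δx] equal v̄_{i−1}, v̄_i, v̄_{i+1}. If the ratio (−2v̄_{i−1} + 3v̄_i − v̄_{i+1})/(−v̄_{i−1} + 2v̄_i − v̄_{i+1}) does not lie in the open interval (0, 3) (or the denominator is zero), then p is monotone on [0, 3Δx]. -/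
open Polynomial

/-- Monotonicity criterion for the quadratic reconstruction on the whole stencil. -/
theorem stmt_10 (Δx : ℝ) (hΔx : 0 < Δx) (p : Polynomial ℝ) (hdeg : p.degree ≤ 2)
    (vm1 v0 vp1 : ℝ)
    (h1 : (1/Δx) * ∫ t in (0:ℝ)..Δx, p.eval t = vm1)
    (h2 : (1/Δx) * ∫ t in Δx..(2*Δx), p.eval t = v0)
    (h3 : (1/Δx) * ∫ t in (2*Δx)..(3*Δx), p.eval t = vp1)
    (hcond : (-2*vm1 + 3*v0 - vp1) / (-vm1 + 2*v0 - vp1) ∉ Set.Ioo (0:ℝ) 3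
      ∨ -vm1 + 2*v0 - vp1 = 0) :
    MonotoneOn (fun x => p.eval x) (Set.Icc 0 (3*Δx))
      ∨ AntitoneOn (fun x => p.eval x) (Set.Icc 0 (3*Δx)) := by
  have hΔ : Δx ≠ 0 := ne_of_gt hΔx
  set a := p.coeff 2 with ha
  set b := p.coeff 1 with hb
  set c := p.coeff 0 with hc
  have hnd : p.natDegree < 3 := by
    have := Polynomial.natDegree_le_of_degree_le (n := 2) hdeg
    omega
  have hev : ∀ x : ℝ, p.eval x = a * x ^ 2 + b * x + c := by
    intro x
    rw [Polynomial.eval_eq_sum_range' hnd]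
    simp [Finset.sum_range_succ]
    ring
  have hderivAt : ∀ x : ℝ, HasDerivAt (fun y : ℝ => a * y ^ 2 + b * y + c) (2 * a * x + b) x := by
    intro x
    have h := (((hasDerivAt_pow 2 x).const_mul a).add ((hasDerivAt_id x).const_mul b)).add_const c
    refine h.congr_deriv ?_
    simp; ring
  have hInt : ∀ s u : ℝ, ∫ t in s..u, p.eval t
      = (a * u ^ 3 / 3 + b * u ^ 2 / 2 + c * u) - (a * s ^ 3 / 3 + b * s ^ 2 / 2 + c * s) := by
    intro s u
    have hF : ∀ x : ℝ, HasDerivAt (fun y : ℝ => a * y ^ 3 / 3 + b * y ^ 2 / 2 + c * y)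
        (p.eval x) x := by
      intro x
      have h := ((((hasDerivAt_pow 3 x).const_mul a).div_const 3).add
        (((hasDerivAt_pow 2 x).const_mul b).div_const 2)).add ((hasDerivAt_id x).const_mul c)
      refine h.congr_deriv ?_
      rw [hev x]; simp; ring
    have hcont : IntervalIntegrable (fun t => p.eval t) MeasureTheory.volume s u :=
      (p.continuous_aeval).intervalIntegrable s u
    exact intervalIntegral.integral_eq_sub_of_hasDerivAt (fun x _ => hF x) hcont
  rw [hInt] at h1 h2 h3
  have hD : -vm1 + 2*v0 - vp1 = -2 * a * Δx ^ 2 := by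
    rw [← h1, ← h2, ← h3]; field_simp; ring
  have hN : -2*vm1 + 3*v0 - vp1 = b * Δx := by
    rw [← h1, ← h2, ← h3]; field_simp; ring
  have key : (∀ x ∈ Set.Ioo (0:ℝ) (3*Δx), 0 ≤ 2*a*x + b) ∨
      (∀ x ∈ Set.Ioo (0:ℝ) (3*Δx), 2*a*x + b ≤ 0) := by
    rcases eq_or_ne a 0 with h0 | h0
    · rcases le_or_gt 0 b with hb0 | hb0
      · exact Or.inl fun x _ => by rw [h0]; linarith
      · exact Or.inr fun x _ => by rw [h0]; linarith
    · have hD0 : -vm1 + 2*v0 - vp1 ≠ 0 := by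
        rw [hD]
        exact mul_ne_zero (mul_ne_zero (by norm_num) h0) (pow_ne_zero 2 hΔ)
      have hr : (-2*vm1 + 3*v0 - vp1) / (-vm1 + 2*v0 - vp1) ∉ Set.Ioo (0:ℝ) 3 := by
        rcases hcond with h | h
        · exact h
        · exact absurd h hD0
      set q := (-2*vm1 + 3*v0 - vp1) / (-vm1 + 2*v0 - vp1) with hq
      have hq' : q ≤ 0 ∨ 3 ≤ q := by
        rcases le_or_gt q 0 with h | h
        · exact Or.inl h
        · exact Or.inr (le_of_not_gt fun h3 => hr ⟨h, h3⟩)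
      have hqb : 2*a*Δx*q = -b := by
        rw [hq, hN, hD]
        field_simp
      rcases lt_or_gt_of_ne h0 with haneg | hapos
      · rcases hq' with hle | hge
        · refine Or.inr fun x hx => ?_
          have hdq : Δx * q ≤ x := by linarith [hx.1, mul_nonpos_of_nonneg_of_nonpos hΔx.le hle]
          linarith [hqb, mul_nonneg (neg_nonneg.mpr haneg.le) (sub_nonneg.mpr hdq)]
        · refine Or.inl fun x hx => ?_
          have hdq : x ≤ Δx * q := by linarith [hx.2, mul_le_mul_of_nonneg_left hge hΔx.le]
          linarith [hqb, mul_nonneg (neg_nonneg.mpr haneg.le) (sub_nonneg.mpr hdq)]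
      · rcases hq' with hle | hge
        · refine Or.inl fun x hx => ?_
          have hdq : Δx * q ≤ x := by linarith [hx.1, mul_nonpos_of_nonneg_of_nonpos hΔx.le hle]
          linarith [hqb, mul_nonneg hapos.le (sub_nonneg.mpr hdq)]
        · refine Or.inr fun x hx => ?_
          have hdq : x ≤ Δx * q := by linarith [hx.2, mul_le_mul_of_nonneg_left hge hΔx.le]
          linarith [hqb, mul_nonneg hapos.le (sub_nonneg.mpr hdq)]
  have hfun : (fun x : ℝ => p.eval x) = fun x => a * x ^ 2 + b * x + c := funext hev
  rw [hfun]
  have hcontf : ContinuousOn (fun x : ℝ => a * x ^ 2 + b * x + c) (Set.Icc 0 (3*Δx)) := by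
    fun_prop
  have hdiff : DifferentiableOn ℝ (fun x : ℝ => a * x ^ 2 + b * x + c)
      (interior (Set.Icc 0 (3*Δx))) :=
    fun x _ => (hderivAt x).differentiableAt.differentiableWithinAt
  rcases key with hpos | hneg
  · refine Or.inl (monotoneOn_of_deriv_nonneg (convex_Icc _ _) hcontf hdiff ?_)
    intro x hx
    rw [interior_Icc] at hx
    rw [(hderivAt x).deriv]
    exact hpos x hx
  · refine Or.inr (antitoneOn_of_deriv_nonpos (convex_Icc _ _) hcontf hdiff ?_)
    intro x hx
    rw [interior_Icc] at hx
    rw [(hderivAt x).deriv]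
    exact hneg x hx
end

section
/- Let v be a C³ function of two variables with v(x_{i+1/2}, y_j) ≠ 0, and let c₁, c₂, c₃ be real constants with c₁ + c₂ + c₃ ≠ 0. If ε² = −[(1/6)v_{xx}(x_{i+1/2},y_j)Δx² + (1/24)v_{yy}(x_{i+1/2},y_j)Δy²] / [(c₁+c₂+c₃)v(x_{i+1/2},y_j)h²], then the perturbed reconstruction (1/2 + c₁ε²h²)v̄_{i,j} + (1/2 + c₂ε²h²)v̄_{i+1,j} + c₃ε²h²·v̄_{i,j−1} equals v(x_{i+1/2}, y_j) + O(Δx³) + O(Δy³). -/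
open Set

lemma abs_sub_le_of_uIcc {m x u : ℝ} (hu : u ∈ Set.uIcc m x) : |u - m| ≤ |x - m| := by
  rcases le_total m x with h | h
  · rw [Set.uIcc_of_le h] at hu
    rw [abs_of_nonneg (by linarith [hu.1]), abs_of_nonneg (by linarith)]
    linarith [hu.2]
  · rw [Set.uIcc_of_ge h] at hu
    rw [abs_of_nonpos (by linarith [hu.2]), abs_of_nonpos (by linarith)]
    linarith [hu.1]

lemma ladder {f f' : ℝ → ℝ} {s : Set ℝ} (hs : Convex ℝ s) {m : ℝ} (hm : m ∈ s)
    {M : ℝ} {k : ℕ} (hf : ∀ x ∈ s, HasDerivAt f (f' x) x)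
    (hb : ∀ x ∈ s, |f' x| ≤ M * |x - m| ^ k) :
    ∀ x ∈ s, |f x - f m| ≤ M * |x - m| ^ (k + 1) := by
  intro x hx
  have hsub : Set.uIcc m x ⊆ s := hs.ordConnected.uIcc_subset hm hx
  have hM0 : 0 ≤ M * |x - m| ^ k := le_trans (abs_nonneg _) (hb x hx)
  have key := Convex.norm_image_sub_le_of_norm_hasDerivWithin_le
    (f := f) (f' := f') (s := Set.uIcc m x) (C := M * |x - m| ^ k)
    (fun u hu => (hf u (hsub hu)).hasDerivWithinAt)
    (fun u hu => by
      rcases eq_or_ne (|x - m|) 0 with h0 | h0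
      · have : |u - m| ≤ 0 := h0 ▸ abs_sub_le_of_uIcc hu
        have hu0 : u = m := by
          have := abs_nonneg (u - m); have : |u - m| = 0 := le_antisymm ‹|u - m| ≤ 0› this
          have := abs_eq_zero.mp this; linarith
        calc ‖f' u‖ = |f' u| := rfl
          _ ≤ M * |u - m| ^ k := hb u (hsub hu)
          _ ≤ M * |x - m| ^ k := by
              rcases k with _ | k
              · simp
              · simp [hu0]
                positivity
      · calc ‖f' u‖ = |f' u| := rfl
          _ ≤ M * |u - m| ^ k := hb u (hsub hu)
          _ ≤ M * |x - m| ^ k := by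
              have h1 : |u - m| ≤ |x - m| := abs_sub_le_of_uIcc hu
              have hMnn : 0 ≤ M := by
                by_contra hneg
                push_neg at hneg
                have : M * |x - m| ^ k < 0 := mul_neg_of_neg_of_pos hneg (by
                  have := abs_nonneg (x - m); positivity)
                linarith
              exact mul_le_mul_of_nonneg_left (pow_le_pow_left₀ (abs_nonneg _) h1 k) hMnn)
    (convex_uIcc m x) Set.left_mem_uIcc Set.right_mem_uIcc
  calc |f x - f m| = ‖f x - f m‖ := rfl
    _ ≤ M * |x - m| ^ k * ‖x - m‖ := key
    _ = M * |x - m| ^ (k + 1) := by rw [Real.norm_eq_abs, pow_succ]; ring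

lemma sq_bound {f d1 d2 : ℝ → ℝ} {s : Set ℝ} (hs : Convex ℝ s) {m : ℝ} (hm : m ∈ s) {M : ℝ}
    (h1 : ∀ x ∈ s, HasDerivAt f (d1 x) x)
    (h2 : ∀ x ∈ s, HasDerivAt d1 (d2 x) x)
    (hM : ∀ x ∈ s, |d2 x| ≤ M) :
    ∀ x ∈ s, |f x - (f m + d1 m * (x - m))| ≤ M * |x - m| ^ 2 := by
  have s0 : ∀ x ∈ s, |d1 x - d1 m| ≤ M * |x - m| ^ 1 := by
    have := ladder (f := d1) (f' := d2) (M := M) (k := 0) hs hm h2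
      (fun x hx => by simpa using hM x hx)
    simpa using this
  have s1 : ∀ x ∈ s, |(f x - (f m + d1 m * (x - m))) - (f m - (f m + d1 m * (m - m)))|
      ≤ M * |x - m| ^ 2 := by
    refine ladder (f := fun x => f x - (f m + d1 m * (x - m))) (f' := fun x => d1 x - d1 m)
      hs hm (fun x hx => ?_) s0
    have : HasDerivAt (fun x => f x - (f m + d1 m * (x - m))) (d1 x - (0 + d1 m * 1)) x := by
      exact (h1 x hx).sub ((hasDerivAt_const x (f m)).add
        (((hasDerivAt_id x).sub_const m).const_mul (d1 m)))
    simpa using this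
  intro x hx
  have := s1 x hx
  simpa using this

lemma cube_bound {f d1 d2 d3 : ℝ → ℝ} {s : Set ℝ} (hs : Convex ℝ s) {m : ℝ} (hm : m ∈ s) {M : ℝ}
    (h1 : ∀ x ∈ s, HasDerivAt f (d1 x) x)
    (h2 : ∀ x ∈ s, HasDerivAt d1 (d2 x) x)
    (h3 : ∀ x ∈ s, HasDerivAt d2 (d3 x) x)
    (hM : ∀ x ∈ s, |d3 x| ≤ M) :
    ∀ x ∈ s, |f x - (f m + d1 m * (x - m) + d2 m / 2 * (x - m) ^ 2)| ≤ M * |x - m| ^ 3 := by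
  have s0 : ∀ x ∈ s, |d1 x - (d1 m + d2 m * (x - m))| ≤ M * |x - m| ^ 2 :=
    sq_bound hs hm h2 h3 hM
  have s1 : ∀ x ∈ s, |(f x - (f m + d1 m * (x - m) + d2 m / 2 * (x - m) ^ 2))
      - (f m - (f m + d1 m * (m - m) + d2 m / 2 * (m - m) ^ 2))| ≤ M * |x - m| ^ 3 := by
    refine ladder (f := fun x => f x - (f m + d1 m * (x - m) + d2 m / 2 * (x - m) ^ 2))
      (f' := fun x => d1 x - (d1 m + d2 m * (x - m))) hs hm (fun x hx => ?_) s0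
    have hp : HasDerivAt (fun x => (x - m) ^ 2) (2 * (x - m) ^ 1 * 1) x :=
      HasDerivAt.fun_pow ((hasDerivAt_id x).sub_const m) 2
    have : HasDerivAt (fun x => f x - (f m + d1 m * (x - m) + d2 m / 2 * (x - m) ^ 2))
        (d1 x - (0 + d1 m * 1 + d2 m / 2 * (2 * (x - m) ^ 1 * 1))) x := by
      exact (h1 x hx).sub (((hasDerivAt_const x (f m)).add
        (((hasDerivAt_id x).sub_const m).const_mul (d1 m))).add (hp.const_mul (d2 m / 2)))
    convert this using 1
    ring
  intro x hx
  have := s1 x hx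
  simpa using this

lemma ipoly (c0 c1 c2 r p q : ℝ) :
    (∫ t in p..q, (c0 + c1 * (t - r) + c2 * (t - r) ^ 2)) =
      c0 * (q - p) + c1 / 2 * ((q - r) ^ 2 - (p - r) ^ 2)
        + c2 / 3 * ((q - r) ^ 3 - (p - r) ^ 3) := by
  have i1 : IntervalIntegrable (fun t : ℝ => c0 + c1 * (t - r)) MeasureTheory.volume p q :=
    (Continuous.intervalIntegrable (by continuity) _ _)
  have i2 : IntervalIntegrable (fun t : ℝ => c2 * (t - r) ^ 2) MeasureTheory.volume p q :=
    (Continuous.intervalIntegrable (by continuity) _ _)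
  have i3 : IntervalIntegrable (fun t : ℝ => (c0 : ℝ)) MeasureTheory.volume p q :=
    (Continuous.intervalIntegrable (by continuity) _ _)
  have i4 : IntervalIntegrable (fun t : ℝ => c1 * (t - r)) MeasureTheory.volume p q :=
    (Continuous.intervalIntegrable (by continuity) _ _)
  rw [intervalIntegral.integral_add i1 i2, intervalIntegral.integral_add i3 i4,
    intervalIntegral.integral_const, intervalIntegral.integral_const_mul,
    intervalIntegral.integral_const_mul]
  have e1 : (∫ t in p..q, (t - r)) = ((q - r) ^ 2 - (p - r) ^ 2) / 2 := by
    rw [intervalIntegral.integral_comp_sub_right (fun u => u) r, integral_id]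
  have e2 : (∫ t in p..q, (t - r) ^ 2) = ((q - r) ^ 3 - (p - r) ^ 3) / 3 := by
    rw [intervalIntegral.integral_comp_sub_right (fun u => u ^ 2) r, integral_pow]
    norm_num
  rw [e1, e2]
  simp [smul_eq_mul]
  ring

/-- Exact double integral of the quadratic polynomial, plus remainder estimate. -/
lemma cellavg (f : ℝ → ℝ → ℝ) (hf : Continuous fun p : ℝ × ℝ => f p.1 p.2)
    (V vx vy vxx vxy vyy a b Bnd : ℝ) (α α' β β' : ℝ) (hα : α ≤ α') (hβ : β ≤ β')
    (hb : ∀ s t, α ≤ s → s ≤ α' → β ≤ t → t ≤ β' →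
      |f s t - (V + vx * (s - a) + vy * (t - b) + vxx / 2 * (s - a) ^ 2
        + vxy * (s - a) * (t - b) + vyy / 2 * (t - b) ^ 2)| ≤ Bnd) :
    |(∫ s in α..α', ∫ t in β..β', f s t)
      - (V * ((α' - α) * (β' - β))
        + vx * (((α' - a) ^ 2 - (α - a) ^ 2) / 2 * (β' - β))
        + vy * ((α' - α) * ((β' - b) ^ 2 - (β - b) ^ 2) / 2)
        + vxx / 2 * (((α' - a) ^ 3 - (α - a) ^ 3) / 3 * (β' - β))
        + vxy * (((α' - a) ^ 2 - (α - a) ^ 2) / 2 * (((β' - b) ^ 2 - (β - b) ^ 2) / 2))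
        + vyy / 2 * ((α' - α) * ((β' - b) ^ 3 - (β - b) ^ 3) / 3))|
      ≤ Bnd * ((α' - α) * (β' - β)) := by
  set Q : ℝ → ℝ → ℝ := fun s t => V + vx * (s - a) + vy * (t - b) + vxx / 2 * (s - a) ^ 2
    + vxy * (s - a) * (t - b) + vyy / 2 * (t - b) ^ 2 with hQdef
  have hQc : Continuous fun p : ℝ × ℝ => Q p.1 p.2 := by
    simp only [hQdef]; continuity
  -- inner integral of Q
  have hinner : ∀ s : ℝ, (∫ t in β..β', Q s t)
      = (V + vx * (s - a) + vxx / 2 * (s - a) ^ 2) * (β' - β)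
        + (vy + vxy * (s - a)) / 2 * ((β' - b) ^ 2 - (β - b) ^ 2)
        + (vyy / 2) / 3 * ((β' - b) ^ 3 - (β - b) ^ 3) := by
    intro s
    rw [intervalIntegral.integral_congr (g := fun t =>
      (V + vx * (s - a) + vxx / 2 * (s - a) ^ 2) + (vy + vxy * (s - a)) * (t - b)
        + (vyy / 2) * (t - b) ^ 2) (fun t _ => by simp only [hQdef]; ring)]
    rw [ipoly]
  -- outer integral of Q
  have hQint : (∫ s in α..α', ∫ t in β..β', Q s t)
      = V * ((α' - α) * (β' - β))
        + vx * (((α' - a) ^ 2 - (α - a) ^ 2) / 2 * (β' - β))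
        + vy * ((α' - α) * ((β' - b) ^ 2 - (β - b) ^ 2) / 2)
        + vxx / 2 * (((α' - a) ^ 3 - (α - a) ^ 3) / 3 * (β' - β))
        + vxy * (((α' - a) ^ 2 - (α - a) ^ 2) / 2 * (((β' - b) ^ 2 - (β - b) ^ 2) / 2))
        + vyy / 2 * ((α' - α) * ((β' - b) ^ 3 - (β - b) ^ 3) / 3) := by
    rw [intervalIntegral.integral_congr (g := fun s =>
      (V * (β' - β) + vy / 2 * ((β' - b) ^ 2 - (β - b) ^ 2)
          + (vyy / 2) / 3 * ((β' - b) ^ 3 - (β - b) ^ 3))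
        + (vx * (β' - β) + vxy / 2 * ((β' - b) ^ 2 - (β - b) ^ 2)) * (s - a)
        + (vxx / 2 * (β' - β)) * (s - a) ^ 2) (fun s _ => by rw [hinner s]; ring)]
    rw [ipoly]
    ring
  -- split
  have hcont1 : Continuous fun s => ∫ t in β..β', f s t :=
    intervalIntegral.continuous_parametric_intervalIntegral_of_continuous'
      (by exact hf) β β'
  have hcont2 : Continuous fun s => ∫ t in β..β', Q s t :=
    intervalIntegral.continuous_parametric_intervalIntegral_of_continuous'
      (by exact hQc) β β'
  have hsplit : (∫ s in α..α', ∫ t in β..β', f s t) - (∫ s in α..α', ∫ t in β..β', Q s t)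
      = ∫ s in α..α', ∫ t in β..β', (f s t - Q s t) := by
    rw [← intervalIntegral.integral_sub (hcont1.intervalIntegrable _ _)
      (hcont2.intervalIntegrable _ _)]
    refine intervalIntegral.integral_congr fun s _ => ?_
    rw [← intervalIntegral.integral_sub]
    · exact (Continuous.intervalIntegrable (by
        have : Continuous fun t => f s t := hf.comp (Continuous.prodMk_right s)
        exact this) _ _)
    · exact (Continuous.intervalIntegrable (by
        have : Continuous fun t => Q s t := hQc.comp (Continuous.prodMk_right s)
        exact this) _ _)
  have hBnd0 : 0 ≤ Bnd := le_trans (abs_nonneg _) (hb α β le_rfl hα le_rfl hβ)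
  have hrem : |∫ s in α..α', ∫ t in β..β', (f s t - Q s t)| ≤ Bnd * ((α' - α) * (β' - β)) := by
    have houter : ∀ s ∈ Set.uIoc α α',
        ‖∫ t in β..β', (f s t - Q s t)‖ ≤ Bnd * (β' - β) := by
      intro s hs
      rw [Set.uIoc_of_le hα] at hs
      have h1 : ∀ t ∈ Set.uIoc β β', ‖f s t - Q s t‖ ≤ Bnd := by
        intro t ht
        rw [Set.uIoc_of_le hβ] at ht
        exact hb s t (le_of_lt hs.1) hs.2 (le_of_lt ht.1) ht.2
      calc ‖∫ t in β..β', (f s t - Q s t)‖ ≤ Bnd * |β' - β| :=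
            intervalIntegral.norm_integral_le_of_norm_le_const h1
        _ = Bnd * (β' - β) := by rw [abs_of_nonneg (by linarith)]
    calc |∫ s in α..α', ∫ t in β..β', (f s t - Q s t)|
        ≤ (Bnd * (β' - β)) * |α' - α| :=
          intervalIntegral.norm_integral_le_of_norm_le_const houter
      _ = Bnd * ((α' - α) * (β' - β)) := by rw [abs_of_nonneg (by linarith)]; ring
  calc |(∫ s in α..α', ∫ t in β..β', f s t) - _|
      = |∫ s in α..α', ∫ t in β..β', (f s t - Q s t)| := by rw [← hQint, hsplit]
    _ ≤ Bnd * ((α' - α) * (β' - β)) := hrem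

noncomputable def px (G : ℝ × ℝ → ℝ) : ℝ × ℝ → ℝ := fun p => fderiv ℝ G p (1, 0)
noncomputable def py (G : ℝ × ℝ → ℝ) : ℝ × ℝ → ℝ := fun p => fderiv ℝ G p (0, 1)

lemma contDiff_px {G : ℝ × ℝ → ℝ} {n m : WithTop ℕ∞} (hG : ContDiff ℝ n G) (hm : m + 1 ≤ n) :
    ContDiff ℝ m (px G) :=
  ((ContinuousLinearMap.apply ℝ ℝ ((1 : ℝ), (0 : ℝ))).contDiff).comp (hG.fderiv_right hm)

lemma contDiff_py {G : ℝ × ℝ → ℝ} {n m : WithTop ℕ∞} (hG : ContDiff ℝ n G) (hm : m + 1 ≤ n) :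
    ContDiff ℝ m (py G) :=
  ((ContinuousLinearMap.apply ℝ ℝ ((0 : ℝ), (1 : ℝ))).contDiff).comp (hG.fderiv_right hm)

lemma slice_x {G : ℝ × ℝ → ℝ} {s t : ℝ} (hG : DifferentiableAt ℝ G (s, t)) :
    HasDerivAt (fun u => G (u, t)) (px G (s, t)) s := by
  have h := hG.hasFDerivAt.comp_hasDerivAt s
    ((hasDerivAt_id s).prodMk (hasDerivAt_const s t))
  exact h

lemma slice_y {G : ℝ × ℝ → ℝ} {s t : ℝ} (hG : DifferentiableAt ℝ G (s, t)) :
    HasDerivAt (fun u => G (s, u)) (py G (s, t)) t := by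
  have h := hG.hasFDerivAt.comp_hasDerivAt t
    ((hasDerivAt_const t s).prodMk (hasDerivAt_id t))
  exact h

lemma cellavg' (f : ℝ → ℝ → ℝ) (hf : Continuous fun p : ℝ × ℝ => f p.1 p.2)
    (V vx vy vxx vxy vyy a b Bnd : ℝ) (α α' β β' I J : ℝ) (hα : α ≤ α') (hβ : β ≤ β')
    (hI : I = V * ((α' - α) * (β' - β))
        + vx * (((α' - a) ^ 2 - (α - a) ^ 2) / 2 * (β' - β))
        + vy * ((α' - α) * ((β' - b) ^ 2 - (β - b) ^ 2) / 2)
        + vxx / 2 * (((α' - a) ^ 3 - (α - a) ^ 3) / 3 * (β' - β))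
        + vxy * (((α' - a) ^ 2 - (α - a) ^ 2) / 2 * (((β' - b) ^ 2 - (β - b) ^ 2) / 2))
        + vyy / 2 * ((α' - α) * ((β' - b) ^ 3 - (β - b) ^ 3) / 3))
    (hJ : J = (α' - α) * (β' - β))
    (hb : ∀ s t, α ≤ s → s ≤ α' → β ≤ t → t ≤ β' →
      |f s t - (V + vx * (s - a) + vy * (t - b) + vxx / 2 * (s - a) ^ 2
        + vxy * (s - a) * (t - b) + vyy / 2 * (t - b) ^ 2)| ≤ Bnd) :
    |(∫ s in α..α', ∫ t in β..β', f s t) - I| ≤ Bnd * J := by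
  rw [hI, hJ]
  exact cellavg f hf V vx vy vxx vxy vyy a b Bnd α α' β β' hα hβ hb

lemma bridge_x (F : ℝ × ℝ → ℝ) (hF : ContDiff ℝ 3 F) (a b : ℝ) :
    iteratedDeriv 2 (fun s => F (s, b)) a = px (px F) (a, b) := by
  have hFd : Differentiable ℝ F := hF.differentiable (by norm_num)
  have hf1 : ContDiff ℝ 2 (px F) := contDiff_px hF (by norm_num)
  have hd1 : deriv (fun s => F (s, b)) = fun s => px F (s, b) :=
    funext fun s => (slice_x (hFd (s, b))).deriv
  rw [show (2 : ℕ) = 1 + 1 from rfl, iteratedDeriv_succ, iteratedDeriv_one, hd1]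
  exact (slice_x ((hf1.differentiable (by norm_num)) (a, b))).deriv

lemma bridge_y (F : ℝ × ℝ → ℝ) (hF : ContDiff ℝ 3 F) (a b : ℝ) :
    iteratedDeriv 2 (fun t => F (a, t)) b = py (py F) (a, b) := by
  have hFd : Differentiable ℝ F := hF.differentiable (by norm_num)
  have hg1 : ContDiff ℝ 2 (py F) := contDiff_py hF (by norm_num)
  have hd1 : deriv (fun t => F (a, t)) = fun t => py F (a, t) :=
    funext fun t => (slice_y (hFd (a, t))).deriv
  rw [show (2 : ℕ) = 1 + 1 from rfl, iteratedDeriv_succ, iteratedDeriv_one, hd1]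
  exact (slice_y ((hg1.differentiable (by norm_num)) (a, b))).deriv

lemma taylorQ (F : ℝ × ℝ → ℝ) (hF : ContDiff ℝ 3 F) (a b : ℝ) :
    ∃ M : ℝ, 0 ≤ M ∧ ∀ s t : ℝ, |s - a| ≤ 1 → |t - b| ≤ 1 →
      |F (s, t) - (F (a, b) + px F (a, b) * (s - a) + py F (a, b) * (t - b)
        + px (px F) (a, b) / 2 * (s - a) ^ 2 + px (py F) (a, b) * (s - a) * (t - b)
        + py (py F) (a, b) / 2 * (t - b) ^ 2)| ≤ M * (|s - a| + |t - b|) ^ 3 := by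
  have hFd : Differentiable ℝ F := hF.differentiable (by norm_num)
  have hf1 : ContDiff ℝ 2 (px F) := contDiff_px hF (by norm_num)
  have hf2 : ContDiff ℝ 1 (px (px F)) := contDiff_px hf1 (by norm_num)
  have hf3c : Continuous (px (px (px F))) := (contDiff_px (m := 0) hf2 (by norm_num)).continuous
  have hg1 : ContDiff ℝ 2 (py F) := contDiff_py hF (by norm_num)
  have hg2 : ContDiff ℝ 1 (py (py F)) := contDiff_py hg1 (by norm_num)
  have hg3c : Continuous (py (py (py F))) := (contDiff_py (m := 0) hg2 (by norm_num)).continuous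
  have hm1 : ContDiff ℝ 1 (px (py F)) := contDiff_px hg1 (by norm_num)
  have hm2c : Continuous (px (px (py F))) := (contDiff_px (m := 0) hm1 (by norm_num)).continuous
  have hd2c : Continuous (px (py (py F))) := (contDiff_px (m := 0) hg2 (by norm_num)).continuous
  set Kc : Set (ℝ × ℝ) := Set.Icc (a - 1) (a + 1) ×ˢ Set.Icc (b - 1) (b + 1) with hKc
  have hKcomp : IsCompact Kc := isCompact_Icc.prod isCompact_Icc
  obtain ⟨M1, hM1⟩ := hKcomp.exists_bound_of_continuousOn hf3c.continuousOn
  obtain ⟨M2, hM2⟩ := hKcomp.exists_bound_of_continuousOn hg3c.continuousOn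
  obtain ⟨M3, hM3⟩ := hKcomp.exists_bound_of_continuousOn hm2c.continuousOn
  obtain ⟨M4, hM4⟩ := hKcomp.exists_bound_of_continuousOn hd2c.continuousOn
  set M : ℝ := max (max M1 M2) (max M3 M4) with hMdef
  have hM0 : 0 ≤ M := by
    have hmem : ((a, b) : ℝ × ℝ) ∈ Kc := by
      constructor <;> (rw [Set.mem_Icc]; constructor <;> linarith)
    calc (0:ℝ) ≤ ‖px (px (px F)) (a, b)‖ := norm_nonneg _
      _ ≤ M1 := hM1 _ hmem
      _ ≤ M := le_trans (le_max_left _ _) (le_max_left _ _)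
  refine ⟨3 * M, by linarith, fun s t hs ht => ?_⟩
  have hsx : s ∈ Set.Icc (a - 1) (a + 1) := by
    rw [Set.mem_Icc]; obtain ⟨h1, h2⟩ := abs_le.mp hs; constructor <;> linarith
  have hty : t ∈ Set.Icc (b - 1) (b + 1) := by
    rw [Set.mem_Icc]; obtain ⟨h1, h2⟩ := abs_le.mp ht; constructor <;> linarith
  have hmemK : ∀ {u w : ℝ}, u ∈ Set.Icc (a-1) (a+1) → w ∈ Set.Icc (b-1) (b+1) →
      ((u, w) : ℝ × ℝ) ∈ Kc := fun hu hw => ⟨hu, hw⟩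
  have hax : a ∈ Set.Icc (a - 1) (a + 1) := by rw [Set.mem_Icc]; constructor <;> linarith
  have hbt : b ∈ Set.Icc (b - 1) (b + 1) := by rw [Set.mem_Icc]; constructor <;> linarith
  -- Step A
  have stepA := cube_bound (M := M) (f := fun u => F (s, u)) (d1 := fun u => py F (s, u))
    (d2 := fun u => py (py F) (s, u)) (d3 := fun u => py (py (py F)) (s, u))
    (convex_Icc (b-1) (b+1)) hbt
    (fun u _ => slice_y (hFd (s, u)))
    (fun u _ => slice_y ((hg1.differentiable (by norm_num)) (s, u)))
    (fun u _ => slice_y ((hg2.differentiable (by norm_num)) (s, u)))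
    (fun u hu => le_trans (hM2 _ (hmemK hsx hu))
      (le_trans (le_max_right M1 M2) (le_max_left (max M1 M2) (max M3 M4))))
    t hty
  -- Step B
  have stepB := cube_bound (M := M) (f := fun u => F (u, b)) (d1 := fun u => px F (u, b))
    (d2 := fun u => px (px F) (u, b)) (d3 := fun u => px (px (px F)) (u, b))
    (convex_Icc (a-1) (a+1)) hax
    (fun u _ => slice_x (hFd (u, b)))
    (fun u _ => slice_x ((hf1.differentiable (by norm_num)) (u, b)))
    (fun u _ => slice_x ((hf2.differentiable (by norm_num)) (u, b)))
    (fun u hu => le_trans (hM1 _ (hmemK hu hbt))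
      (le_trans (le_max_left M1 M2) (le_max_left (max M1 M2) (max M3 M4))))
    s hsx
  -- Step C
  have stepC := sq_bound (M := M) (f := fun u => py F (u, b)) (d1 := fun u => px (py F) (u, b))
    (d2 := fun u => px (px (py F)) (u, b))
    (convex_Icc (a-1) (a+1)) hax
    (fun u _ => slice_x ((hg1.differentiable (by norm_num)) (u, b)))
    (fun u _ => slice_x ((hm1.differentiable (by norm_num)) (u, b)))
    (fun u hu => le_trans (hM3 _ (hmemK hu hbt))
      (le_trans (le_max_left M3 M4) (le_max_right (max M1 M2) (max M3 M4))))
    s hsx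
  -- Step D
  have stepD := ladder (f := fun u => py (py F) (u, b)) (f' := fun u => px (py (py F)) (u, b))
    (M := M) (k := 0)
    (convex_Icc (a-1) (a+1)) hax
    (fun u _ => slice_x ((hg2.differentiable (by norm_num)) (u, b)))
    (fun u hu => by
      rw [pow_zero, mul_one]
      exact le_trans (hM4 _ (hmemK hu hbt))
        (le_trans (le_max_right M3 M4) (le_max_right (max M1 M2) (max M3 M4))))
    s hsx
  simp only [zero_add, pow_one] at stepD
  -- combine
  have hid : F (s, t) - (F (a, b) + px F (a, b) * (s - a) + py F (a, b) * (t - b)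
        + px (px F) (a, b) / 2 * (s - a) ^ 2 + px (py F) (a, b) * (s - a) * (t - b)
        + py (py F) (a, b) / 2 * (t - b) ^ 2)
      = (F (s, t) - ((fun u => F (s, u)) b + (fun u => py F (s, u)) b * (t - b)
          + (fun u => py (py F) (s, u)) b / 2 * (t - b) ^ 2))
        + (F (s, b) - ((fun u => F (u, b)) a + (fun u => px F (u, b)) a * (s - a)
          + (fun u => px (px F) (u, b)) a / 2 * (s - a) ^ 2))
        + (t - b) * (py F (s, b) - ((fun u => py F (u, b)) a
          + (fun u => px (py F) (u, b)) a * (s - a)))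
        + (t - b) ^ 2 / 2 * (py (py F) (s, b) - (fun u => py (py F) (u, b)) a) := by
    dsimp only
    ring
  rw [hid]
  dsimp only
  have abs4 : ∀ w x y z : ℝ, |w + x + y + z| ≤ |w| + |x| + |y| + |z| := by
    intro w x y z
    calc |w + x + y + z| ≤ |w + x + y| + |z| := abs_add_le _ _
      _ ≤ |w + x| + |y| + |z| := by linarith [abs_add_le (w + x) y]
      _ ≤ |w| + |x| + |y| + |z| := by linarith [abs_add_le w x]
  refine le_trans (abs4 _ _ _ _) ?_
  have e1 : |(t - b) * (py F (s, b) - (py F (a, b) + px (py F) (a, b) * (s - a)))|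
      ≤ |t - b| * (M * |s - a| ^ 2) := by
    rw [abs_mul]
    exact mul_le_mul_of_nonneg_left stepC (abs_nonneg _)
  have e2 : |(t - b) ^ 2 / 2 * (py (py F) (s, b) - py (py F) (a, b))|
      ≤ |t - b| ^ 2 / 2 * (M * |s - a|) := by
    rw [abs_mul, abs_div, abs_pow, abs_two]
    exact mul_le_mul_of_nonneg_left stepD (by positivity)
  have hp0 : (0:ℝ) ≤ |s - a| := abs_nonneg _
  have hq0 : (0:ℝ) ≤ |t - b| := abs_nonneg _
  nlinarith [stepA, stepB, e1, e2, mul_nonneg hM0 (mul_nonneg hp0 hq0),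
    mul_nonneg (mul_nonneg hM0 hp0) (mul_nonneg hp0 hq0),
    mul_nonneg (mul_nonneg hM0 hq0) (mul_nonneg hq0 hp0),
    mul_nonneg (mul_nonneg hM0 hp0) (mul_nonneg hp0 hp0),
    mul_nonneg (mul_nonneg hM0 hq0) (mul_nonneg hq0 hq0)]

open Filter Asymptotics

set_option maxHeartbeats 1000000 in
/-- Third-order accuracy of the perturbed 2D linear reconstruction with the optimal choice of
the shape parameter `ε²`, which cancels the second-order error terms. -/
theorem stmt_14 (v : ℝ → ℝ → ℝ) (hv : ContDiff ℝ 3 (fun p : ℝ × ℝ => v p.1 p.2))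
    (a b : ℝ) (hvab : v a b ≠ 0) (c₁ c₂ c₃ : ℝ) (hc : c₁ + c₂ + c₃ ≠ 0)
    (h : ℝ → ℝ → ℝ) (hpos : ∀ dx dy, 0 < dx → 0 < dy → 0 < h dx dy)
    (C c : ℝ) (hC : 0 < C) (hc' : 0 < c)
    (hcomp : ∀ dx dy, 0 < dx → 0 < dy →
      c * max dx dy ≤ h dx dy ∧ h dx dy ≤ C * max dx dy) :
    (fun d : ℝ × ℝ =>
        (let Δx := d.1
         let Δy := d.2
         let vij := (1/(Δx*Δy)) * ∫ s in (a - Δx)..a, ∫ t in (b - Δy/2)..(b + Δy/2), v s t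
         let vi1j := (1/(Δx*Δy)) * ∫ s in a..(a + Δx), ∫ t in (b - Δy/2)..(b + Δy/2), v s t
         let vijm1 := (1/(Δx*Δy)) * ∫ s in (a - Δx)..a, ∫ t in (b - 3*Δy/2)..(b - Δy/2), v s t
         let e2 := -((1/6) * iteratedDeriv 2 (fun s => v s b) a * Δx ^ 2
              + (1/24) * iteratedDeriv 2 (fun t => v a t) b * Δy ^ 2)
            / ((c₁ + c₂ + c₃) * v a b * (h Δx Δy) ^ 2)
         (1/2 + c₁ * e2 * (h Δx Δy) ^ 2) * vij
           + (1/2 + c₂ * e2 * (h Δx Δy) ^ 2) * vi1j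
           + (c₃ * e2 * (h Δx Δy) ^ 2) * vijm1)
        - v a b)
      =O[nhdsWithin (0 : ℝ × ℝ) (Set.Ioi 0 ×ˢ Set.Ioi 0)]
        (fun d : ℝ × ℝ => |d.1| ^ 3 + |d.2| ^ 3) := by
  have hvc : Continuous fun p : ℝ × ℝ => v p.1 p.2 := hv.continuous
  obtain ⟨M, hM0, hQ⟩ := taylorQ (fun p => v p.1 p.2) hv a b
  dsimp only at hQ
  set V : ℝ := v a b with hV
  set vx : ℝ := px (fun p : ℝ × ℝ => v p.1 p.2) (a, b) with hvx
  set vy : ℝ := py (fun p : ℝ × ℝ => v p.1 p.2) (a, b) with hvy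
  set vxx : ℝ := px (px fun p : ℝ × ℝ => v p.1 p.2) (a, b) with hvxx
  set vxy : ℝ := px (py fun p : ℝ × ℝ => v p.1 p.2) (a, b) with hvxy
  set vyy : ℝ := py (py fun p : ℝ × ℝ => v p.1 p.2) (a, b) with hvyy
  have hBX : iteratedDeriv 2 (fun s => v s b) a = vxx := by
    rw [hvxx]; exact bridge_x _ hv a b
  have hBY : iteratedDeriv 2 (fun t => v a t) b = vyy := by
    rw [hvyy]; exact bridge_y _ hv a b
  have hSV : (c₁ + c₂ + c₃) * V ≠ 0 := mul_ne_zero hc hvab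
  clear_value V vx vy vxx vxy vyy
  set A : ℝ := (|vxx| + |vyy|) / |(c₁ + c₂ + c₃) * V| with hA
  have hA0 : 0 ≤ A := by positivity
  set W : ℝ := |vx| + |vy| + |vxx| + |vxy| + |vyy| + 1 with hW
  set B1 : ℝ := (|c₁| + |c₂| + |c₃|) * W with hB1
  have hB10 : 0 ≤ B1 := by positivity
  clear_value A W B1
  rw [Asymptotics.isBigO_iff]
  refine ⟨2*A*B1 + 14*M*(1 + (|c₁|+|c₂|+|c₃|)*A), ?_⟩
  filter_upwards [mem_nhdsWithin_of_mem_nhds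
    (Metric.ball_mem_nhds (0:ℝ×ℝ) (show (0:ℝ) < 1/2 by norm_num)), self_mem_nhdsWithin]
    with d hd1 hd2
  obtain ⟨X, Y⟩ := d
  rw [Metric.mem_ball, Prod.dist_eq] at hd1
  simp only [Prod.fst_zero, Prod.snd_zero, Real.dist_eq, sub_zero] at hd1
  obtain ⟨hdX, hdY⟩ := max_lt_iff.mp hd1
  simp only [Set.mem_prod, Set.mem_Ioi] at hd2
  obtain ⟨hX0, hY0⟩ := hd2
  have hX1 : X < 1/2 := lt_of_abs_lt hdX
  have hY1 : Y < 1/2 := lt_of_abs_lt hdY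
  have hXY : (0:ℝ) < X * Y := mul_pos hX0 hY0
  dsimp only
  rw [hBX, hBY]
  have hh : h X Y ≠ 0 := (hpos X Y hX0 hY0).ne'
  set Bnd : ℝ := M * (X + 3*Y/2)^3 with hBnd
  have hBnd0 : 0 ≤ Bnd := by rw [hBnd]; positivity
  clear_value Bnd
  have hb1 : ∀ s t, a - X ≤ s → s ≤ a → b - Y/2 ≤ t → t ≤ b + Y/2 →
      |v s t - (V + vx*(s-a) + vy*(t-b) + vxx/2*(s-a)^2 + vxy*(s-a)*(t-b) + vyy/2*(t-b)^2)|
        ≤ Bnd := by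
    intro s t hs1 hs2 ht1 ht2
    have hs : |s - a| ≤ X := abs_le.mpr ⟨by linarith, by linarith⟩
    have ht : |t - b| ≤ 3*Y/2 := abs_le.mpr ⟨by linarith, by linarith⟩
    refine le_trans (hQ s t (by linarith) (by linarith)) ?_
    rw [hBnd]
    exact mul_le_mul_of_nonneg_left (pow_le_pow_left₀ (by positivity) (by linarith) 3) hM0
  have hb2 : ∀ s t, a ≤ s → s ≤ a + X → b - Y/2 ≤ t → t ≤ b + Y/2 →
      |v s t - (V + vx*(s-a) + vy*(t-b) + vxx/2*(s-a)^2 + vxy*(s-a)*(t-b) + vyy/2*(t-b)^2)|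
        ≤ Bnd := by
    intro s t hs1 hs2 ht1 ht2
    have hs : |s - a| ≤ X := abs_le.mpr ⟨by linarith, by linarith⟩
    have ht : |t - b| ≤ 3*Y/2 := abs_le.mpr ⟨by linarith, by linarith⟩
    refine le_trans (hQ s t (by linarith) (by linarith)) ?_
    rw [hBnd]
    exact mul_le_mul_of_nonneg_left (pow_le_pow_left₀ (by positivity) (by linarith) 3) hM0
  have hb3 : ∀ s t, a - X ≤ s → s ≤ a → b - 3*Y/2 ≤ t → t ≤ b - Y/2 →
      |v s t - (V + vx*(s-a) + vy*(t-b) + vxx/2*(s-a)^2 + vxy*(s-a)*(t-b) + vyy/2*(t-b)^2)|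
        ≤ Bnd := by
    intro s t hs1 hs2 ht1 ht2
    have hs : |s - a| ≤ X := abs_le.mpr ⟨by linarith, by linarith⟩
    have ht : |t - b| ≤ 3*Y/2 := abs_le.mpr ⟨by linarith, by linarith⟩
    refine le_trans (hQ s t (by linarith) (by linarith)) ?_
    rw [hBnd]
    exact mul_le_mul_of_nonneg_left (pow_le_pow_left₀ (by positivity) (by linarith) 3) hM0
  have h1 := cellavg' v hvc V vx vy vxx vxy vyy a b Bnd (a - X) a (b - Y/2) (b + Y/2)
    (X*Y*(V - vx*X/2 + vxx*X^2/6 + vyy*Y^2/24)) (X*Y)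
    (by linarith) (by linarith) (by ring) (by ring) hb1
  have h2 := cellavg' v hvc V vx vy vxx vxy vyy a b Bnd a (a + X) (b - Y/2) (b + Y/2)
    (X*Y*(V + vx*X/2 + vxx*X^2/6 + vyy*Y^2/24)) (X*Y)
    (by linarith) (by linarith) (by ring) (by ring) hb2
  have h3 := cellavg' v hvc V vx vy vxx vxy vyy a b Bnd (a - X) a (b - 3*Y/2) (b - Y/2)
    (X*Y*(V - vx*X/2 - vy*Y + vxx*X^2/6 + vxy*X*Y/2 + vyy*13*Y^2/24)) (X*Y)
    (by linarith) (by linarith) (by ring) (by ring) hb3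
  clear hb1 hb2 hb3 hQ hcomp hpos
  set I1 : ℝ := ∫ s in (a - X)..a, ∫ t in (b - Y/2)..(b + Y/2), v s t with hI1
  set I2 : ℝ := ∫ s in a..(a + X), ∫ t in (b - Y/2)..(b + Y/2), v s t with hI2
  set I3 : ℝ := ∫ s in (a - X)..a, ∫ t in (b - 3*Y/2)..(b - Y/2), v s t with hI3
  set Qb1 : ℝ := V - vx*X/2 + vxx*X^2/6 + vyy*Y^2/24 with hQb1
  set Qb2 : ℝ := V + vx*X/2 + vxx*X^2/6 + vyy*Y^2/24 with hQb2
  set Qb3 : ℝ := V - vx*X/2 - vy*Y + vxx*X^2/6 + vxy*X*Y/2 + vyy*13*Y^2/24 with hQb3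
  clear_value I1 I2 I3 Qb1 Qb2 Qb3
  have e1 : |1/(X*Y) * I1 - Qb1| ≤ Bnd := by
    have hrw : 1/(X*Y) * I1 - Qb1 = (I1 - X*Y*Qb1) / (X*Y) := by field_simp [hXY.ne']
    rw [hrw, abs_div, abs_of_pos hXY, div_le_iff₀ hXY]
    exact h1
  have e2 : |1/(X*Y) * I2 - Qb2| ≤ Bnd := by
    have hrw : 1/(X*Y) * I2 - Qb2 = (I2 - X*Y*Qb2) / (X*Y) := by field_simp [hXY.ne']
    rw [hrw, abs_div, abs_of_pos hXY, div_le_iff₀ hXY]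
    exact h2
  have e3 : |1/(X*Y) * I3 - Qb3| ≤ Bnd := by
    have hrw : 1/(X*Y) * I3 - Qb3 = (I3 - X*Y*Qb3) / (X*Y) := by field_simp [hXY.ne']
    rw [hrw, abs_div, abs_of_pos hXY, div_le_iff₀ hXY]
    exact h3
  set K : ℝ := -(1/6 * vxx * X^2 + 1/24 * vyy * Y^2) / ((c₁ + c₂ + c₃) * V) with hK
  set E1 : ℝ := 1/(X*Y) * I1 - Qb1 with hE1
  set E2 : ℝ := 1/(X*Y) * I2 - Qb2 with hE2
  set E3 : ℝ := 1/(X*Y) * I3 - Qb3 with hE3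
  set L : ℝ := c₁*(Qb1 - V) + c₂*(Qb2 - V) + c₃*(Qb3 - V) with hL
  clear_value K E1 E2 E3 L
  have hkey : (1 / 2 + c₁ * (-(1 / 6 * vxx * X ^ 2 + 1 / 24 * vyy * Y ^ 2)
          / ((c₁ + c₂ + c₃) * V * h X Y ^ 2)) * h X Y ^ 2) * (1 / (X * Y) * I1)
      + (1 / 2 + c₂ * (-(1 / 6 * vxx * X ^ 2 + 1 / 24 * vyy * Y ^ 2)
          / ((c₁ + c₂ + c₃) * V * h X Y ^ 2)) * h X Y ^ 2) * (1 / (X * Y) * I2)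
      + c₃ * (-(1 / 6 * vxx * X ^ 2 + 1 / 24 * vyy * Y ^ 2)
          / ((c₁ + c₂ + c₃) * V * h X Y ^ 2)) * h X Y ^ 2 * (1 / (X * Y) * I3) - V
      = K*L + (1/2 + c₁*K)*E1 + (1/2 + c₂*K)*E2 + c₃*K*E3 := by
    have hKh : -(1/6 * vxx * X^2 + 1/24 * vyy * Y^2)
        / ((c₁ + c₂ + c₃) * V * h X Y ^ 2) * h X Y ^ 2 = K := by
      rw [hK]
      rw [div_mul_eq_mul_div, mul_comm ((c₁ + c₂ + c₃) * V) (h X Y ^ 2),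
        ← div_div, mul_div_assoc]
      rw [div_self (pow_ne_zero 2 hh), mul_one]
    rw [mul_assoc c₁, mul_assoc c₂, mul_assoc c₃, hKh]
    rw [hE1, hE2, hE3, hL, hK, hQb1, hQb2, hQb3]
    field_simp
    ring
  have habs : |(1:ℝ)/2| = 1/2 := by norm_num
  have hKb : |K| ≤ A * (X^2 + Y^2) := by
    have n1 : |1/6 * vxx * X^2 + 1/24 * vyy * Y^2| ≤ (|vxx| + |vyy|) * (X^2 + Y^2) := by
      refine le_trans (abs_add_le _ _) ?_
      have a1 : |1/6 * vxx * X^2| = 1/6 * |vxx| * X^2 := by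
        rw [abs_mul, abs_mul, abs_pow, sq_abs]; norm_num
      have a2 : |1/24 * vyy * Y^2| = 1/24 * |vyy| * Y^2 := by
        rw [abs_mul, abs_mul, abs_pow, sq_abs]; norm_num
      rw [a1, a2]
      nlinarith only [abs_nonneg vxx, abs_nonneg vyy, sq_nonneg X, sq_nonneg Y,
        mul_nonneg (abs_nonneg vxx) (sq_nonneg Y), mul_nonneg (abs_nonneg vyy) (sq_nonneg X),
        mul_nonneg (abs_nonneg vxx) (sq_nonneg X), mul_nonneg (abs_nonneg vyy) (sq_nonneg Y)]
    rw [hK, abs_div, abs_neg, hA,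
      div_mul_eq_mul_div (|vxx| + |vyy|) (|(c₁ + c₂ + c₃) * V|) (X^2 + Y^2)]
    have hSVpos : 0 < |(c₁ + c₂ + c₃) * V| := abs_pos.mpr hSV
    exact (div_le_div_iff_of_pos_right hSVpos).mpr n1
  have hKA : |K| ≤ A := by
    refine le_trans hKb ?_
    have hx2 : X^2 + Y^2 ≤ 1 := by nlinarith only [hX0, hY0, hX1, hY1]
    nlinarith only [mul_nonneg hA0 (by nlinarith only [hx2] : (0:ℝ) ≤ 1 - (X^2 + Y^2))]
  have hW0 : (0:ℝ) ≤ W := by rw [hW]; positivity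
  have q1 : |Qb1 - V| ≤ W * (X + Y) := by
    have hq : Qb1 - V = -(vx*X/2) + vxx*X^2/6 + vyy*Y^2/24 := by rw [hQb1]; ring
    rw [hq]
    refine le_trans (abs_add_three _ _ _) ?_
    have a1 : |-(vx*X/2)| = |vx| * X / 2 := by
      rw [abs_neg, abs_div, abs_mul, abs_of_pos hX0, abs_two]
    have a2 : |vxx*X^2/6| = |vxx| * X^2 / 6 := by
      rw [abs_div, abs_mul, abs_pow, sq_abs]; norm_num
    have a3 : |vyy*Y^2/24| = |vyy| * Y^2 / 24 := by
      rw [abs_div, abs_mul, abs_pow, sq_abs]; norm_num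
    rw [a1, a2, a3, hW]
    nlinarith only [abs_nonneg vx, abs_nonneg vy, abs_nonneg vxx, abs_nonneg vxy, abs_nonneg vyy,
      hX0.le, hY0.le, mul_nonneg (abs_nonneg vxx) (by nlinarith only [hX0, hX1] : (0:ℝ) ≤ X - X^2),
      mul_nonneg (abs_nonneg vyy) (by nlinarith only [hY0, hY1] : (0:ℝ) ≤ Y - Y^2),
      mul_nonneg (abs_nonneg vx) hX0.le, mul_nonneg (abs_nonneg vx) hY0.le,
      mul_nonneg (abs_nonneg vy) hX0.le, mul_nonneg (abs_nonneg vy) hY0.le,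
      mul_nonneg (abs_nonneg vxx) hY0.le, mul_nonneg (abs_nonneg vyy) hX0.le,
      mul_nonneg (abs_nonneg vxy) hX0.le, mul_nonneg (abs_nonneg vxy) hY0.le]
  have q2 : |Qb2 - V| ≤ W * (X + Y) := by
    have hq : Qb2 - V = vx*X/2 + vxx*X^2/6 + vyy*Y^2/24 := by rw [hQb2]; ring
    rw [hq]
    refine le_trans (abs_add_three _ _ _) ?_
    have a1 : |vx*X/2| = |vx| * X / 2 := by
      rw [abs_div, abs_mul, abs_of_pos hX0, abs_two]
    have a2 : |vxx*X^2/6| = |vxx| * X^2 / 6 := by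
      rw [abs_div, abs_mul, abs_pow, sq_abs]; norm_num
    have a3 : |vyy*Y^2/24| = |vyy| * Y^2 / 24 := by
      rw [abs_div, abs_mul, abs_pow, sq_abs]; norm_num
    rw [a1, a2, a3, hW]
    nlinarith only [abs_nonneg vx, abs_nonneg vy, abs_nonneg vxx, abs_nonneg vxy, abs_nonneg vyy,
      hX0.le, hY0.le, mul_nonneg (abs_nonneg vxx) (by nlinarith only [hX0, hX1] : (0:ℝ) ≤ X - X^2),
      mul_nonneg (abs_nonneg vyy) (by nlinarith only [hY0, hY1] : (0:ℝ) ≤ Y - Y^2),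
      mul_nonneg (abs_nonneg vx) hX0.le, mul_nonneg (abs_nonneg vx) hY0.le,
      mul_nonneg (abs_nonneg vy) hX0.le, mul_nonneg (abs_nonneg vy) hY0.le,
      mul_nonneg (abs_nonneg vxx) hY0.le, mul_nonneg (abs_nonneg vyy) hX0.le,
      mul_nonneg (abs_nonneg vxy) hX0.le, mul_nonneg (abs_nonneg vxy) hY0.le]
  have q3 : |Qb3 - V| ≤ W * (X + Y) := by
    have hq : Qb3 - V = (-(vx*X/2) + -(vy*Y)) + (vxx*X^2/6 + vxy*X*Y/2) + vyy*13*Y^2/24 := by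
      rw [hQb3]; ring
    rw [hq]
    refine le_trans (abs_add_three _ _ _) ?_
    have b1 : |(-(vx*X/2) + -(vy*Y))| ≤ |vx| * X / 2 + |vy| * Y := by
      refine le_trans (abs_add_le _ _) ?_
      have a1 : |-(vx*X/2)| = |vx| * X / 2 := by
        rw [abs_neg, abs_div, abs_mul, abs_of_pos hX0, abs_two]
      have a2 : |-(vy*Y)| = |vy| * Y := by rw [abs_neg, abs_mul, abs_of_pos hY0]
      rw [a1, a2]
    have b2 : |(vxx*X^2/6 + vxy*X*Y/2)| ≤ |vxx| * X^2 / 6 + |vxy| * X * Y / 2 := by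
      refine le_trans (abs_add_le _ _) ?_
      have a1 : |vxx*X^2/6| = |vxx| * X^2 / 6 := by
        rw [abs_div, abs_mul, abs_pow, sq_abs]; norm_num
      have a2 : |vxy*X*Y/2| = |vxy| * X * Y / 2 := by
        rw [abs_div, abs_mul, abs_mul, abs_of_pos hX0, abs_of_pos hY0, abs_two]
      rw [a1, a2]
    have b3 : |vyy*13*Y^2/24| = |vyy| * 13 * Y^2 / 24 := by
      rw [abs_div, abs_mul, abs_mul, abs_pow, sq_abs]; norm_num
    rw [b3, hW]
    have hXY1 : X * Y ≤ Y := by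
      nlinarith only [mul_nonneg hY0.le (by nlinarith only [hX1] : (0:ℝ) ≤ 1 - X)]
    nlinarith only [b1, b2, abs_nonneg vx, abs_nonneg vy, abs_nonneg vxx, abs_nonneg vxy,
      abs_nonneg vyy, hX0.le, hY0.le,
      mul_nonneg (abs_nonneg vxx) (by nlinarith only [hX0, hX1] : (0:ℝ) ≤ X - X^2),
      mul_nonneg (abs_nonneg vyy) (by nlinarith only [hY0, hY1] : (0:ℝ) ≤ Y - 13*Y^2/24),
      mul_nonneg (abs_nonneg vxy) (by nlinarith only [hXY1] : (0:ℝ) ≤ Y - X*Y),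
      mul_nonneg (abs_nonneg vx) hX0.le, mul_nonneg (abs_nonneg vx) hY0.le,
      mul_nonneg (abs_nonneg vy) hX0.le, mul_nonneg (abs_nonneg vxx) hY0.le,
      mul_nonneg (abs_nonneg vxy) hX0.le, mul_nonneg (abs_nonneg vyy) hX0.le]
  have hLb : |L| ≤ B1 * (X + Y) := by
    rw [hL]
    refine le_trans (abs_add_three _ _ _) ?_
    have m1 : |c₁ * (Qb1 - V)| ≤ |c₁| * (W * (X + Y)) := by
      rw [abs_mul]; exact mul_le_mul_of_nonneg_left q1 (abs_nonneg c₁)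
    have m2 : |c₂ * (Qb2 - V)| ≤ |c₂| * (W * (X + Y)) := by
      rw [abs_mul]; exact mul_le_mul_of_nonneg_left q2 (abs_nonneg c₂)
    have m3 : |c₃ * (Qb3 - V)| ≤ |c₃| * (W * (X + Y)) := by
      rw [abs_mul]; exact mul_le_mul_of_nonneg_left q3 (abs_nonneg c₃)
    rw [hB1]
    nlinarith only [m1, m2, m3]
  have hBnd14 : Bnd ≤ 14 * M * (X^3 + Y^3) := by
    rw [hBnd]
    nlinarith only [mul_nonneg hM0 (mul_nonneg hX0.le (sq_nonneg (X - Y))),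
      mul_nonneg hM0 (mul_nonneg hY0.le (sq_nonneg (X - Y))),
      mul_nonneg hM0 (mul_nonneg hX0.le (mul_nonneg hX0.le hY0.le)),
      mul_nonneg hM0 (mul_nonneg hY0.le (mul_nonneg hX0.le hY0.le)),
      hM0, mul_nonneg hX0.le hY0.le]
  rw [Real.norm_eq_abs, Real.norm_eq_abs, abs_of_pos hX0, abs_of_pos hY0,
    abs_of_pos (show (0:ℝ) < X^3 + Y^3 by positivity), hkey]
  have u1 : |K*L| ≤ A*(X^2+Y^2)*(B1*(X+Y)) := by
    rw [abs_mul]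
    exact mul_le_mul hKb hLb (abs_nonneg _) (by positivity)
  have u2 : |(1/2 + c₁*K)*E1| ≤ (1/2 + |c₁| *A)*Bnd := by
    rw [abs_mul]
    refine mul_le_mul ?_ e1 (abs_nonneg _) (by positivity)
    refine le_trans (abs_add_le _ _) ?_
    rw [habs, abs_mul]
    nlinarith only [mul_le_mul_of_nonneg_left hKA (abs_nonneg c₁)]
  have u3 : |(1/2 + c₂*K)*E2| ≤ (1/2 + |c₂| *A)*Bnd := by
    rw [abs_mul]
    refine mul_le_mul ?_ e2 (abs_nonneg _) (by positivity)
    refine le_trans (abs_add_le _ _) ?_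
    rw [habs, abs_mul]
    nlinarith only [mul_le_mul_of_nonneg_left hKA (abs_nonneg c₂)]
  have u4 : |c₃*K*E3| ≤ (|c₃| *A)*Bnd := by
    rw [abs_mul, abs_mul]
    refine mul_le_mul ?_ e3 (abs_nonneg _) (by positivity)
    exact mul_le_mul_of_nonneg_left hKA (abs_nonneg c₃)
  have habs4 : ∀ w x y z : ℝ, |w + x + y + z| ≤ |w| + |x| + |y| + |z| := by
    intro w x y z
    calc |w + x + y + z| ≤ |w + x + y| + |z| := abs_add_le _ _
      _ ≤ |w + x| + |y| + |z| := by linarith only [abs_add_le (w + x) y]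
      _ ≤ |w| + |x| + |y| + |z| := by linarith only [abs_add_le w x]
  refine le_trans (habs4 _ _ _ _) ?_
  have w1 : A*(X^2+Y^2)*(B1*(X+Y)) ≤ 2*A*B1*(X^3+Y^3) := by
    have hcub : (X^2+Y^2)*(X+Y) ≤ 2*(X^3+Y^3) := by
      nlinarith only [mul_nonneg hX0.le hY0.le, sq_nonneg (X-Y), hX0.le, hY0.le,
        mul_nonneg (add_nonneg hX0.le hY0.le) (sq_nonneg (X-Y))]
    calc A*(X^2+Y^2)*(B1*(X+Y)) = (A*B1)*((X^2+Y^2)*(X+Y)) := by ring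
      _ ≤ (A*B1)*(2*(X^3+Y^3)) := mul_le_mul_of_nonneg_left hcub (by positivity)
      _ = 2*A*B1*(X^3+Y^3) := by ring
  have w3 : (1 + (|c₁|+|c₂|+|c₃|)*A)*Bnd ≤ (1 + (|c₁|+|c₂|+|c₃|)*A)*(14*M*(X^3+Y^3)) :=
    mul_le_mul_of_nonneg_left hBnd14 (by positivity)
  calc |K*L| + |(1/2 + c₁*K)*E1| + |(1/2 + c₂*K)*E2| + |c₃*K*E3|
      ≤ 2*A*B1*(X^3+Y^3) + (1 + (|c₁|+|c₂|+|c₃|)*A)*(14*M*(X^3+Y^3)) := by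
        linarith only [u1, u2, u3, u4, w1, w3]
    _ = (2*A*B1 + 14*M*(1 + (|c₁|+|c₂|+|c₃|)*A)) * (X^3+Y^3) := by ring
end
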